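/- arXiv:1905.05545 — 7 statements merged into one kernel-verified Lean document; each statement's English description precedes it below -/
import Mathlib

section
/- Let F be a field, let S = F[x_1, …, x_g] be a polynomial ring with its standard grading, and let ≺ be a monomial order on S. Let I be a homogeneous ideal of S which is generated by its homogeneous elements of degree 2, and let G be a set of homogeneous degree-2 elements of I. If dim_F (S/⟨in_≺(f) : f ∈ G⟩)_2 ≤ dim_F (S/I)_2, then I = ⟨G⟩. -/
open MvPolynomial

/-- The leading exponent of a multivariate polynomial with respect to a monomial order:
the `≺`-largest exponent appearing in the support (and `0` for the zero polynomial). -/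
noncomputable def leadExp {σ F : Type*} [CommSemiring F] (m : MonomialOrder σ)
    (f : MvPolynomial σ F) : σ →₀ ℕ :=
  m.toSyn.symm (f.support.sup fun d => m.toSyn d)

/-- The leading term `in_≺(f)` of a multivariate polynomial with respect to a monomial order. -/
noncomputable def leadTerm {σ F : Type*} [CommSemiring F] (m : MonomialOrder σ)
    (f : MvPolynomial σ F) : MvPolynomial σ F :=
  monomial (leadExp m f) (f.coeff (leadExp m f))

/-- The dimension of the degree-2 graded piece of `S/J`, realized as the image of the
space of homogeneous degree-2 polynomials in the quotient. -/
noncomputable def dimDegTwoPiece (F : Type*) [Field F] {σ : Type*}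
    (J : Ideal (MvPolynomial σ F)) : ℕ :=
  Module.finrank F
    ((homogeneousSubmodule σ F 2).map (Ideal.Quotient.mkₐ F J).toLinearMap)

/-! ### Auxiliary lemmas -/

lemma le_toSyn_leadExp {σ F : Type*} [CommSemiring F] (m : MonomialOrder σ)
    {f : MvPolynomial σ F} {d : σ →₀ ℕ} (hd : d ∈ f.support) :
    m.toSyn d ≤ m.toSyn (leadExp m f) := by
  rw [leadExp, AddEquiv.apply_symm_apply]
  exact Finset.le_sup hd

lemma leadExp_mem_support {σ F : Type*} [CommSemiring F] (m : MonomialOrder σ)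
    {f : MvPolynomial σ F} (hf : f ≠ 0) : leadExp m f ∈ f.support := by
  obtain ⟨d, hd, he⟩ := Finset.exists_mem_eq_sup f.support
    (MvPolynomial.support_nonempty.mpr hf) (fun d => m.toSyn d)
  rw [leadExp, he, AddEquiv.symm_apply_apply]
  exact hd

/-- Nonzero polynomials with pairwise distinct leading exponents are linearly independent. -/
lemma linearIndependent_of_leadExp {σ F : Type*} [Field F] (m : MonomialOrder σ)
    {ι : Type*} (v : ι → MvPolynomial σ F) (h0 : ∀ i, v i ≠ 0)
    (hinj : Function.Injective fun i => leadExp m (v i)) :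
    LinearIndependent F v := by
  classical
  rw [linearIndependent_iff']
  intro s c hsum i hi
  by_contra hci
  set t := s.filter fun j => c j ≠ 0 with ht
  have htne : t.Nonempty := ⟨i, Finset.mem_filter.mpr ⟨hi, hci⟩⟩
  obtain ⟨i₀, hi₀t, hmax⟩ := t.exists_max_image (fun j => m.toSyn (leadExp m (v j))) htne
  have hi₀s : i₀ ∈ s := (Finset.mem_filter.mp hi₀t).1
  have hci₀ : c i₀ ≠ 0 := (Finset.mem_filter.mp hi₀t).2
  set e := leadExp m (v i₀) with he
  have hcoeff : (∑ j ∈ s, c j • v j).coeff e = 0 := by rw [hsum]; simp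
  rw [MvPolynomial.coeff_sum] at hcoeff
  have hsingle : ∀ j ∈ s, j ≠ i₀ → (c j • v j).coeff e = 0 := by
    intro j hjs hj
    by_cases hcj : c j = 0
    · simp [hcj]
    · have hjt : j ∈ t := Finset.mem_filter.mpr ⟨hjs, hcj⟩
      have hle := hmax j hjt
      by_contra hne
      have hsupp : e ∈ (v j).support := by
        rw [MvPolynomial.coeff_smul] at hne
        exact MvPolynomial.mem_support_iff.mpr fun h => hne (by simp [h])
      have := le_toSyn_leadExp m hsupp
      have heq : leadExp m (v j) = e := m.toSyn.injective (le_antisymm hle this)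
      exact hj (hinj heq)
  rw [Finset.sum_eq_single_of_mem i₀ hi₀s hsingle] at hcoeff
  rw [MvPolynomial.coeff_smul] at hcoeff
  have : (v i₀).coeff e ≠ 0 :=
    MvPolynomial.mem_support_iff.mp (leadExp_mem_support m (h0 i₀))
  exact hci₀ ((smul_eq_zero.mp hcoeff).resolve_right this)

/-- The degree-2 homogeneous component of `a * g`, for `g` homogeneous of degree 2. -/
lemma homogComp_two_mul {σ F : Type*} [CommSemiring F] (a g : MvPolynomial σ F)
    (hg : g.IsHomogeneous 2) :
    homogeneousComponent 2 (a * g) = a.coeff 0 • g := by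
  conv_lhs => rw [← sum_homogeneousComponent a, Finset.sum_mul, map_sum]
  have hterm : ∀ i ∈ Finset.range (a.totalDegree + 1),
      homogeneousComponent 2 (homogeneousComponent i a * g)
        = if i = 0 then homogeneousComponent 0 a * g else 0 := by
    intro i _
    have hmem : homogeneousComponent i a * g ∈ homogeneousSubmodule σ F (i + 2) :=
      (mem_homogeneousSubmodule _ _).mpr
        ((homogeneousComponent_isHomogeneous i a).mul hg)
    rw [homogeneousComponent_of_mem hmem]
    by_cases hi : i = 0
    · subst hi; simp
    · rw [if_neg (by omega), if_neg hi]
  rw [Finset.sum_congr rfl hterm, Finset.sum_ite_eq' (Finset.range (a.totalDegree + 1)) 0,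
    if_pos (Finset.mem_range.mpr (Nat.succ_pos _)), homogeneousComponent_zero,
    MvPolynomial.smul_eq_C_mul]

/-- The degree-2 part of the ideal generated by a set of degree-2 homogeneous polynomials
is the `F`-linear span of that set. -/
lemma spanF_eq_inf {σ F : Type*} [Field F] (G : Set (MvPolynomial σ F))
    (hG : ∀ f ∈ G, f.IsHomogeneous 2) :
    Submodule.restrictScalars F (Ideal.span G) ⊓ homogeneousSubmodule σ F 2
      = Submodule.span F G := by
  apply le_antisymm
  · rintro p hp
    obtain ⟨hpI, hp2⟩ := Submodule.mem_inf.mp hp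
    have key : ∀ q ∈ Ideal.span G, ∀ a : MvPolynomial σ F,
        homogeneousComponent 2 (a * q) ∈ Submodule.span F G := by
      intro q hq
      refine Submodule.span_induction ?_ ?_ ?_ ?_ hq
      · intro g hg a
        rw [homogComp_two_mul a g (hG g hg)]
        exact Submodule.smul_mem _ _ (Submodule.subset_span hg)
      · intro a; simp
      · intro x y _ _ hax hay a
        rw [mul_add, map_add]; exact add_mem (hax a) (hay a)
      · intro r x _ hrx a
        rw [smul_eq_mul, ← mul_assoc]; exact hrx (a * r)
    have h1 := key p hpI 1
    rwa [one_mul, homogeneousComponent_of_mem hp2, if_pos rfl] at h1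
  · rw [Submodule.span_le]
    intro f hf
    exact Submodule.mem_inf.mpr
      ⟨Ideal.subset_span hf, (mem_homogeneousSubmodule 2 f).mpr (hG f hf)⟩

instance homogFinDim {F : Type*} [Field F] {g : ℕ} :
    FiniteDimensional F (homogeneousSubmodule (Fin g) F 2) :=
  Submodule.finiteDimensional_of_le (S₂ := MvPolynomial.restrictTotalDegree (Fin g) F 2)
    (fun p hp => (MvPolynomial.mem_restrictTotalDegree _ 2 p).mpr
      (((mem_homogeneousSubmodule 2 p).mp hp).totalDegree_le))

/-- Rank–nullity for the degree-2 piece of `S/J`. -/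
lemma finrank_piece {F : Type*} [Field F] {g : ℕ} (J : Ideal (MvPolynomial (Fin g) F)) :
    Module.finrank F
        ((homogeneousSubmodule (Fin g) F 2).map (Ideal.Quotient.mkₐ F J).toLinearMap)
      + Module.finrank F ↥(Submodule.restrictScalars F J ⊓ homogeneousSubmodule (Fin g) F 2)
    = Module.finrank F ↥(homogeneousSubmodule (Fin g) F 2) := by
  set p := homogeneousSubmodule (Fin g) F 2
  set f := (Ideal.Quotient.mkₐ F J).toLinearMap.comp p.subtype
  have h1 : p.map (Ideal.Quotient.mkₐ F J).toLinearMap = LinearMap.range f := by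
    rw [LinearMap.range_comp, Submodule.range_subtype]
  have h2 : LinearMap.ker f = Submodule.comap p.subtype ((Submodule.restrictScalars F J ⊓ p)) := by
    ext x
    simp only [LinearMap.mem_ker, Submodule.mem_comap, Submodule.mem_inf]
    constructor
    · intro h
      exact ⟨Ideal.Quotient.eq_zero_iff_mem.mp h, x.2⟩
    · intro h
      exact Ideal.Quotient.eq_zero_iff_mem.mpr h.1
  have h3 := LinearMap.finrank_range_add_finrank_ker f
  have h4 : Module.finrank F ↥(LinearMap.ker f)
      = Module.finrank F ↥(Submodule.restrictScalars F J ⊓ p) := by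
    rw [h2]
    exact LinearEquiv.finrank_eq (Submodule.comapSubtypeEquivOfLe inf_le_right)
  rw [h1, ← h4]
  exact h3

/-- The span of the leading terms has dimension at most that of the span. -/
lemma finrank_span_leadTerm_le {σ F : Type*} [Field F] (m : MonomialOrder σ)
    (G : Set (MvPolynomial σ F)) [FiniteDimensional F ↥(Submodule.span F G)] :
    Module.finrank F ↥(Submodule.span F (leadTerm m '' G))
      ≤ Module.finrank F ↥(Submodule.span F G) := by
  classical
  set V := Submodule.span F G with hV
  set E := leadExp m '' {f | f ∈ G ∧ f ≠ 0} with hE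
  have hw : ∀ e : E, ∃ f, (f ∈ G ∧ f ≠ 0) ∧ leadExp m f = (e : σ →₀ ℕ) := fun e => e.2
  choose w hwG hwe using hw
  have hinj : Function.Injective fun e : E => leadExp m (w e) := by
    intro a b h
    apply Subtype.ext
    rw [← hwe a, ← hwe b]
    exact h
  have liw : LinearIndependent F w :=
    linearIndependent_of_leadExp m w (fun e => (hwG e).2) hinj
  set w' : E → ↥V := fun e => ⟨w e, Submodule.subset_span (hwG e).1⟩ with hw'
  have liw' : LinearIndependent F w' :=
    LinearIndependent.of_comp V.subtype liw
  haveI hEfinite : Finite ↥E := liw'.finite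
  haveI : Fintype ↥E := Fintype.ofFinite _
  have hcard : Fintype.card ↥E ≤ Module.finrank F ↥V := liw'.fintype_card_le_finrank
  set t : Finset (σ →₀ ℕ) := E.toFinset with htdef
  set s : Finset (MvPolynomial σ F) := t.image fun e => monomial e (1 : F) with hsdef
  have hle : Submodule.span F (leadTerm m '' G)
      ≤ Submodule.span F (s : Set (MvPolynomial σ F)) := by
    rw [Submodule.span_le]
    rintro _ ⟨f, hf, rfl⟩
    by_cases hf0 : f = 0
    · subst hf0
      have : leadTerm m (0 : MvPolynomial σ F) = 0 := by simp [leadTerm]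
      rw [this]; exact Submodule.zero_mem _
    · have hmem : monomial (leadExp m f) (1 : F) ∈ (s : Set (MvPolynomial σ F)) := by
        simp only [hsdef, Finset.coe_image, Set.mem_image, Finset.mem_coe, htdef,
          Set.mem_toFinset]
        exact ⟨leadExp m f, ⟨f, ⟨hf, hf0⟩, rfl⟩, rfl⟩
      have heq : leadTerm m f
          = (f.coeff (leadExp m f)) • monomial (leadExp m f) (1 : F) := by
        rw [MvPolynomial.smul_monomial, smul_eq_mul, mul_one, leadTerm]
      rw [heq]
      exact Submodule.smul_mem _ _ (Submodule.subset_span hmem)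
  calc Module.finrank F ↥(Submodule.span F (leadTerm m '' G))
      ≤ Module.finrank F ↥(Submodule.span F (s : Set (MvPolynomial σ F))) :=
        Submodule.finrank_mono hle
    _ ≤ s.card := finrank_span_finset_le_card s
    _ ≤ t.card := Finset.card_image_le
    _ = Fintype.card ↥E := Set.toFinset_card E
    _ ≤ Module.finrank F ↥V := hcard

/-- if `I` is a homogeneous ideal of `S = F[x_1, …, x_g]` generated by its
homogeneous degree-2 elements, `G` is a set of homogeneous degree-2 elements of `I`, and
`dim_F (S/⟨in_≺(G)⟩)_2 ≤ dim_F (S/I)_2`, then `I = ⟨G⟩`. -/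
theorem generation_criterion_degree_two {F : Type*} [Field F] {g : ℕ}
    (m : MonomialOrder (Fin g)) (I : Ideal (MvPolynomial (Fin g) F))
    (hI : I = Ideal.span {f : MvPolynomial (Fin g) F | f ∈ I ∧ f.IsHomogeneous 2})
    (G : Set (MvPolynomial (Fin g) F)) (hGI : G ⊆ (I : Set (MvPolynomial (Fin g) F)))
    (hGhom : ∀ f ∈ G, f.IsHomogeneous 2)
    (hdim : dimDegTwoPiece F (Ideal.span (leadTerm m '' G)) ≤ dimDegTwoPiece F I) :
    I = Ideal.span G := by
  classical
  have hGle : Submodule.span F G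
      ≤ Submodule.restrictScalars F I ⊓ homogeneousSubmodule (Fin g) F 2 := by
    rw [Submodule.span_le]
    intro f hf
    exact Submodule.mem_inf.mpr ⟨hGI hf, (mem_homogeneousSubmodule 2 f).mpr (hGhom f hf)⟩
  haveI : FiniteDimensional F
      ↥(Submodule.restrictScalars F I ⊓ homogeneousSubmodule (Fin g) F 2) :=
    Submodule.finiteDimensional_of_le inf_le_right
  haveI : FiniteDimensional F ↥(Submodule.span F G) :=
    Submodule.finiteDimensional_of_le hGle
  -- the leading terms are homogeneous of degree 2
  have hLT : ∀ h ∈ leadTerm m '' G, MvPolynomial.IsHomogeneous h 2 := by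
    rintro _ ⟨f, hf, rfl⟩
    by_cases hf0 : f = 0
    · subst hf0
      have : leadTerm m (0 : MvPolynomial (Fin g) F) = 0 := by simp [leadTerm]
      rw [this]
      exact (mem_homogeneousSubmodule 2 (0 : MvPolynomial (Fin g) F)).mp
        (Submodule.zero_mem _)
    · apply isHomogeneous_monomial
      have hc : f.coeff (leadExp m f) ≠ 0 :=
        MvPolynomial.mem_support_iff.mp (leadExp_mem_support m hf0)
      have := hGhom f hf hc
      rw [Finsupp.degree_eq_weight_one]
      exact this
  have hA1 : Submodule.restrictScalars F (Ideal.span (leadTerm m '' G))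
      ⊓ homogeneousSubmodule (Fin g) F 2 = Submodule.span F (leadTerm m '' G) :=
    spanF_eq_inf _ hLT
  have hB1 := finrank_piece (F := F) (Ideal.span (leadTerm m '' G))
  have hB2 := finrank_piece (F := F) I
  rw [hA1] at hB1
  have hdim' : Module.finrank F
        ↥(Submodule.restrictScalars F I ⊓ homogeneousSubmodule (Fin g) F 2)
      ≤ Module.finrank F ↥(Submodule.span F (leadTerm m '' G)) := by
    unfold dimDegTwoPiece at hdim
    omega
  have hC := finrank_span_leadTerm_le m G
  have hVK : Submodule.span F G
      = Submodule.restrictScalars F I ⊓ homogeneousSubmodule (Fin g) F 2 :=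
    Submodule.eq_of_le_of_finrank_le hGle (le_trans hdim' hC)
  have hset : {f : MvPolynomial (Fin g) F | f ∈ I ∧ f.IsHomogeneous 2}
      = ((Submodule.restrictScalars F I ⊓ homogeneousSubmodule (Fin g) F 2 :
          Submodule F (MvPolynomial (Fin g) F)) : Set (MvPolynomial (Fin g) F)) := by
    ext f
    simp [Submodule.mem_inf, mem_homogeneousSubmodule]
  rw [hI, hset, ← hVK]
  exact Submodule.span_span_of_tower (R := F) (S := MvPolynomial (Fin g) F) (s := G)
end

section
/- Let p be a prime and q ≥ 2, 1 ≤ ℓ ≤ p−1 integers. Then C(0) = {(ρ, T) ∈ A + A : 2 ≤ T ≤ p−2 and ρ ≥ b(T+p) − ℓ}. In particular, when ℓ = 1 (so that b(T+p) = 0 for all relevant T), C(0) = {(ρ, T) ∈ A + A : 2 ≤ T ≤ p−2}. -/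
open Pointwise

/-- The index set `A` of the paper. -/
def indexSetA (p q ℓ : ℤ) : Set (ℤ × ℤ) :=
  {x : ℤ × ℤ | 1 ≤ x.2 ∧ x.2 ≤ p - 1 ∧ x.2 * ℓ / p ≤ x.1 ∧ x.1 ≤ x.2 * q - 2}

/-- `b(T) = min { ⌊μℓ/p⌋ + ⌊μ'ℓ/p⌋ : μ + μ' = T, 1 ≤ μ, μ' ≤ p - 1 }`. -/
noncomputable def bLow (p ℓ T : ℤ) : ℤ :=
  sInf {s : ℤ | ∃ μ μ' : ℤ, μ + μ' = T ∧ 1 ≤ μ ∧ μ ≤ p - 1 ∧ 1 ≤ μ' ∧ μ' ≤ p - 1 ∧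
    s = μ * ℓ / p + μ' * ℓ / p}

/-- `j_min(i)`: `0` if `ℓ = 1` and `p - i` otherwise. -/
def jMin (p ℓ i : ℤ) : ℤ := if ℓ = 1 then 0 else p - i

/-- The subset `C(i)` of the Minkowski sum `A + A`. -/
def setC (p q ℓ i : ℤ) : Set (ℤ × ℤ) :=
  {x : ℤ × ℤ | x ∈ indexSetA p q ℓ + indexSetA p q ℓ ∧
    (x.1 + ℓ, x.2 + p) ∈ indexSetA p q ℓ + indexSetA p q ℓ ∧
    ∀ j : ℤ, jMin p ℓ i ≤ j → j ≤ (p - i) * q →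
      (x.1 + j, x.2 + p - i) ∈ indexSetA p q ℓ + indexSetA p q ℓ}

/-- The set whose infimum is `bLow`. -/
def bSet (p ℓ T : ℤ) : Set ℤ :=
  {s : ℤ | ∃ μ μ' : ℤ, μ + μ' = T ∧ 1 ≤ μ ∧ μ ≤ p - 1 ∧ 1 ≤ μ' ∧ μ' ≤ p - 1 ∧
    s = μ * ℓ / p + μ' * ℓ / p}

lemma bLow_eq (p ℓ T : ℤ) : bLow p ℓ T = sInf (bSet p ℓ T) := rfl

lemma floor_nonneg' {p ℓ μ : ℤ} (hp : 2 ≤ p) (hℓ : 1 ≤ ℓ) (hμ : 1 ≤ μ) :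
    0 ≤ μ * ℓ / p :=
  Int.ediv_nonneg (by nlinarith) (by omega)

lemma floor_le_sub_one {p ℓ μ : ℤ} (hp : 2 ≤ p) (hℓ : 1 ≤ ℓ) (hℓp : ℓ ≤ p - 1)
    (hμ : 1 ≤ μ) : μ * ℓ / p ≤ μ - 1 := by
  have h : μ * ℓ / p < μ := by
    rw [Int.ediv_lt_iff_lt_mul (by omega : (0:ℤ) < p)]
    nlinarith
  omega

lemma bSet_bddBelow (p ℓ T : ℤ) (hp : 2 ≤ p) (hℓ : 1 ≤ ℓ) : BddBelow (bSet p ℓ T) := by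
  refine ⟨0, ?_⟩
  rintro s ⟨μ, μ', rfl, h1, h2, h3, h4, rfl⟩
  have := floor_nonneg' hp hℓ h1
  have := floor_nonneg' hp hℓ h3
  omega

lemma bSet_nonempty (p ℓ T : ℤ) (hp : 2 ≤ p) (h2 : 2 ≤ T) (hT : T ≤ 2 * p - 2) :
    (bSet p ℓ T).Nonempty := by
  refine ⟨_, max 1 (T - (p - 1)), T - max 1 (T - (p - 1)), by omega, by omega, by omega,
    by omega, by omega, rfl⟩

lemma bLow_nonneg (p ℓ T : ℤ) (hp : 2 ≤ p) (hℓ : 1 ≤ ℓ) (h2 : 2 ≤ T) (hT : T ≤ 2 * p - 2) :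
    0 ≤ bLow p ℓ T := by
  rw [bLow_eq]
  refine le_csInf (bSet_nonempty p ℓ T hp h2 hT) ?_
  rintro s ⟨μ, μ', rfl, h1, h2, h3, h4, rfl⟩
  have := floor_nonneg' hp hℓ h1
  have := floor_nonneg' hp hℓ h3
  omega

lemma bLow_eq_zero (p T : ℤ) (hp : 2 ≤ p) (h2 : 2 ≤ T) (hT : T ≤ 2 * p - 2) :
    bLow p 1 T = 0 := by
  have key : ∀ s ∈ bSet p 1 T, s = 0 := by
    rintro s ⟨μ, μ', rfl, h1, h2, h3, h4, rfl⟩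
    rw [mul_one, mul_one, Int.ediv_eq_zero_of_lt (by omega) (by omega),
      Int.ediv_eq_zero_of_lt (by omega) (by omega)]
    omega
  obtain ⟨s, hs⟩ := bSet_nonempty p 1 T hp h2 hT
  rw [bLow_eq]
  refine le_antisymm (csInf_le (bSet_bddBelow p 1 T hp le_rfl) ?_)
    (le_csInf ⟨s, hs⟩ fun t ht => (key t ht).ge)
  have := key s hs
  subst this
  exact hs

/-- Characterization of the Minkowski sum `A + A`. -/
lemma mem_AA_iff (p q ℓ : ℤ) (hq : 2 ≤ q) (hℓ1 : 1 ≤ ℓ) (hℓp : ℓ ≤ p - 1) (x : ℤ × ℤ) :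
    x ∈ indexSetA p q ℓ + indexSetA p q ℓ ↔
      2 ≤ x.2 ∧ x.2 ≤ 2 * p - 2 ∧ bLow p ℓ x.2 ≤ x.1 ∧ x.1 ≤ x.2 * q - 4 := by
  have hp : 2 ≤ p := by omega
  constructor
  · rintro ⟨a, ha, b, hb, hab⟩
    obtain ⟨ha1, ha2, ha3, ha4⟩ := ha
    obtain ⟨hb1, hb2, hb3, hb4⟩ := hb
    have h2 : a.2 + b.2 = x.2 := congrArg Prod.snd hab
    have h1 : a.1 + b.1 = x.1 := congrArg Prod.fst hab
    have hmem : a.2 * ℓ / p + b.2 * ℓ / p ∈ bSet p ℓ x.2 :=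
      ⟨a.2, b.2, h2, ha1, ha2, hb1, hb2, rfl⟩
    have hb' : bLow p ℓ x.2 ≤ a.2 * ℓ / p + b.2 * ℓ / p := csInf_le (bSet_bddBelow p ℓ x.2 hp hℓ1) hmem
    refine ⟨by omega, by omega, by omega, ?_⟩
    have : x.2 * q = a.2 * q + b.2 * q := by rw [← h2]; ring
    omega
  · rintro ⟨h2, hT, hbl, hub⟩
    obtain ⟨μ, μ', hsum, hμ1, hμ2, hμ'1, hμ'2, heq⟩ :=
      Int.csInf_mem (bSet_nonempty p ℓ x.2 hp h2 hT) (bSet_bddBelow p ℓ x.2 hp hℓ1)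
    rw [← bLow_eq] at heq
    have hf1 : μ * ℓ / p ≤ μ - 1 := floor_le_sub_one hp hℓ1 hℓp hμ1
    have hf2 : μ' * ℓ / p ≤ μ' - 1 := floor_le_sub_one hp hℓ1 hℓp hμ'1
    have hq1 : μ - 1 ≤ μ * q - 2 := by nlinarith
    have hq2 : μ' - 1 ≤ μ' * q - 2 := by nlinarith
    set N : ℤ := min (μ * q - 2) (x.1 - μ' * ℓ / p) with hN
    set N' : ℤ := x.1 - N with hN'
    have hxq : x.2 * q = μ * q + μ' * q := by rw [← hsum]; ring
    have hmemA : (N, μ) ∈ indexSetA p q ℓ :=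
      ⟨hμ1, hμ2, by simp only [indexSetA]; omega, by simp only; omega⟩
    have hmemB : (N', μ') ∈ indexSetA p q ℓ :=
      ⟨hμ'1, hμ'2, by simp only; omega, by simp only; omega⟩
    have hx : x = (N, μ) + (N', μ') := by
      rw [Prod.ext_iff]
      constructor <;> simp <;> omega
    rw [hx]
    exact Set.add_mem_add hmemA hmemB

/-- `C(0) = {(ρ, T) ∈ A + A : 2 ≤ T ≤ p - 2, ρ ≥ b(T + p) - ℓ}`; in particular,
when `ℓ = 1`, `C(0) = {(ρ, T) ∈ A + A : 2 ≤ T ≤ p - 2}`. -/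
theorem setC_zero_description (p q ℓ : ℤ) (hp : Prime p) (hq : 2 ≤ q)
    (hℓ1 : 1 ≤ ℓ) (hℓp : ℓ ≤ p - 1) :
    setC p q ℓ 0 =
      {x : ℤ × ℤ | x ∈ indexSetA p q ℓ + indexSetA p q ℓ ∧
        2 ≤ x.2 ∧ x.2 ≤ p - 2 ∧ bLow p ℓ (x.2 + p) - ℓ ≤ x.1} ∧
    (ℓ = 1 → setC p q ℓ 0 =
      {x : ℤ × ℤ | x ∈ indexSetA p q ℓ + indexSetA p q ℓ ∧ 2 ≤ x.2 ∧ x.2 ≤ p - 2}) := by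
  have hp2 : 2 ≤ p := by omega
  have main : setC p q ℓ 0 =
      {x : ℤ × ℤ | x ∈ indexSetA p q ℓ + indexSetA p q ℓ ∧
        2 ≤ x.2 ∧ x.2 ≤ p - 2 ∧ bLow p ℓ (x.2 + p) - ℓ ≤ x.1} := by
    ext x
    simp only [setC, Set.mem_setOf_eq, jMin, sub_zero]
    rw [mem_AA_iff p q ℓ hq hℓ1 hℓp x,
      mem_AA_iff p q ℓ hq hℓ1 hℓp (x.1 + ℓ, x.2 + p)]
    simp only
    constructor
    · rintro ⟨h1, h2, _⟩
      exact ⟨h1, h1.1, by omega, by omega⟩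
    · rintro ⟨h1, hT2, hTp, hbl⟩
      have hpq : p ≤ p * q := le_mul_of_one_le_right (by omega) (by omega)
      have hexp : (x.2 + p) * q = x.2 * q + p * q := by ring
      refine ⟨h1, ⟨by omega, by omega, by omega, by omega⟩, ?_⟩
      intro j hj1 hj2
      rw [mem_AA_iff p q ℓ hq hℓ1 hℓp]
      simp only
      refine ⟨by omega, by omega, ?_, by omega⟩
      by_cases hℓ : ℓ = 1
      · subst hℓ
        simp only [if_pos rfl] at hj1
        have := bLow_eq_zero p (x.2 + p) hp2 (by omega) (by omega)
        have := bLow_nonneg p 1 x.2 hp2 le_rfl h1.1 h1.2.1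
        omega
      · simp only [if_neg hℓ] at hj1
        omega
  refine ⟨main, fun hℓ => ?_⟩
  subst hℓ
  rw [main]
  ext x
  simp only [Set.mem_setOf_eq]
  constructor
  · rintro ⟨h1, h2, h3, _⟩
    exact ⟨h1, h2, h3⟩
  · rintro ⟨h1, h2, h3⟩
    refine ⟨h1, h2, h3, ?_⟩
    rw [mem_AA_iff p q 1 hq le_rfl hℓp] at h1
    have := bLow_eq_zero p (x.2 + p) hp2 (by omega) (by omega)
    have := bLow_nonneg p 1 x.2 hp2 le_rfl h1.1 h1.2.1
    omega
end

section
/- Let p ≥ 3 be a prime and q ≥ 2, 1 ≤ ℓ ≤ p−1 integers, and let g = Σ_{μ=1}^{p−1} (μq − ⌊μℓ/p⌋ − 1). Then |(A + A) \ C(0)| ≤ 3(g − 1). -/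
open Pointwise

open Finset
set_option linter.unusedSectionVars false
set_option maxHeartbeats 1000000

-- core arithmetic helpers
lemma mulcancel (p k : ℤ) (hp : 0 < p) (h1 : -p < p*k) (h2 : p*k < p) : k = 0 := by
  rcases lt_trichotomy k 0 with h | h | h
  · exfalso; nlinarith
  · exact h
  · exfalso; nlinarith

lemma ediv_add_lt (p a b : ℤ) (hp : 0 < p) (h : a % p + b % p < p) :
    (a+b)/p = a/p + b/p := by
  have ha := Int.mul_ediv_add_emod a p
  have hb := Int.mul_ediv_add_emod b p
  have hc := Int.mul_ediv_add_emod (a+b) p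
  have ha0 := Int.emod_nonneg a (ne_of_gt hp)
  have hb0 := Int.emod_nonneg b (ne_of_gt hp)
  have hc0 := Int.emod_nonneg (a+b) (ne_of_gt hp)
  have hcl := Int.emod_lt_of_pos (a+b) hp
  have key : (a+b)/p - a/p - b/p = 0 := by
    apply mulcancel p _ hp <;> nlinarith
  linarith
lemma ediv_add_ge (p a b : ℤ) (hp : 0 < p) (h : p ≤ a % p + b % p) :
    (a+b)/p = a/p + b/p + 1 := by
  have ha := Int.mul_ediv_add_emod a p
  have hb := Int.mul_ediv_add_emod b p
  have hc := Int.mul_ediv_add_emod (a+b) p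
  have ha0 := Int.emod_lt_of_pos a hp
  have hb0 := Int.emod_lt_of_pos b hp
  have hc0 := Int.emod_nonneg (a+b) (ne_of_gt hp)
  have hcl := Int.emod_lt_of_pos (a+b) hp
  have key : (a+b)/p - a/p - b/p - 1 = 0 := by
    apply mulcancel p _ hp <;> nlinarith
  linarith

lemma sum_reflect (a b : ℤ) (f : ℤ → ℤ) :
    ∑ i ∈ Icc a b, f (a + b - i) = ∑ i ∈ Icc a b, f i := by
  refine Finset.sum_nbij' (fun i => a + b - i) (fun i => a + b - i) ?_ ?_ ?_ ?_ ?_ <;>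
    simp only [mem_Icc] <;> intros <;> first | omega | trivial

lemma gauss (a b : ℤ) (h : a ≤ b + 1) :
    2 * (∑ i ∈ Icc a b, i) = (b - a + 1) * (a + b) := by
  have h1 : ∑ i ∈ Icc a b, (a + b - i) = ∑ i ∈ Icc a b, i := sum_reflect a b id
  have h2 : (∑ i ∈ Icc a b, i) + (∑ i ∈ Icc a b, i)
      = ∑ i ∈ Icc a b, (i + (a + b - i)) := by
    rw [Finset.sum_add_distrib, h1]
  have h3 : ∑ i ∈ Icc a b, (i + (a + b - i)) = ∑ i ∈ Icc a b, (a + b) := by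
    apply Finset.sum_congr rfl; intros; ring
  have h4 : ∑ _i ∈ Icc a b, (a + b) = ((Icc a b).card : ℤ) * (a + b) := by
    rw [Finset.sum_const, nsmul_eq_mul]
  have h5 : ((Icc a b).card : ℤ) = b + 1 - a := Int.card_Icc_of_le a b (by omega)
  have h6 : 2 * (∑ i ∈ Icc a b, i) = (∑ i ∈ Icc a b, i) + (∑ i ∈ Icc a b, i) := by ring
  rw [h6, h2, h3, h4, h5]; ring

lemma card_Icc_int (a b : ℤ) : ((Icc a b).card : ℤ) = max (b + 1 - a) 0 := by
  rw [Int.card_Icc]; exact Int.ofNat_toNat _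

def noCarry (p ℓ T : ℤ) : Prop :=
  ∀ μ : ℤ, 1 ≤ μ → μ ≤ p - 1 → 1 ≤ T - μ → T - μ ≤ p - 1 →
    μ * ℓ % p + (T - μ) * ℓ % p < p

open scoped Classical in
noncomputable def eF (p ℓ T : ℤ) : ℤ := if noCarry p ℓ T then 1 else 0

lemma eF_cases (p ℓ T : ℤ) : eF p ℓ T = 0 ∨ eF p ℓ T = 1 := by
  unfold eF; split <;> simp


-- residue-sum decomposition: r_μ + r_{T-μ} = r_T + p * k for some k
lemma carry_decomp (p ℓ T μ : ℤ) (hp0 : 0 < p) :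
    μ * ℓ % p + (T - μ) * ℓ % p = T * ℓ % p + p * (T*ℓ/p - μ*ℓ/p - (T-μ)*ℓ/p) := by
  have h1 := Int.mul_ediv_add_emod (μ*ℓ) p
  have h2 := Int.mul_ediv_add_emod ((T-μ)*ℓ) p
  have h3 := Int.mul_ediv_add_emod (T*ℓ) p
  have key : T*ℓ = μ*ℓ + (T-μ)*ℓ := by ring
  nlinarith [h1, h2, h3]


section
variable {p q ℓ : ℤ} (hp : Prime p) (hp3 : 3 ≤ p) (hq : 2 ≤ q) (hℓ1 : 1 ≤ ℓ) (hℓp : ℓ ≤ p - 1)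

include hp hp3 hℓ1 hℓp in
lemma res_pos {μ : ℤ} (h1 : 1 ≤ μ) (h2 : μ ≤ p - 1) : 1 ≤ μ * ℓ % p := by
  have hp0 : (0:ℤ) < p := by omega
  have h0 := Int.emod_nonneg (μ*ℓ) (ne_of_gt hp0)
  rcases eq_or_lt_of_le h0 with h | h
  · exfalso
    have hdvd : p ∣ μ * ℓ := Int.dvd_of_emod_eq_zero h.symm
    rcases (hp.2.2 μ ℓ hdvd) with h' | h' <;>
      [ have := Int.le_of_dvd (by omega) h' ; have := Int.le_of_dvd (by omega) h' ] <;> omega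
  · omega

include hp hp3 hℓ1 hℓp in
lemma pair_sum {μ : ℤ} (h1 : 1 ≤ μ) (h2 : μ ≤ p - 1) :
    μ * ℓ / p + (p - μ) * ℓ / p = ℓ - 1 := by
  have hp0 : (0:ℤ) < p := by omega
  have r1 := res_pos hp hp3 hℓ1 hℓp h1 h2
  have r2 := res_pos hp hp3 hℓ1 hℓp (show 1 ≤ p - μ by omega) (show p - μ ≤ p - 1 by omega)
  have l1 := Int.emod_lt_of_pos (μ*ℓ) hp0
  have l2 := Int.emod_lt_of_pos ((p-μ)*ℓ) hp0
  have e1 := Int.mul_ediv_add_emod (μ*ℓ) p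
  have e2 := Int.mul_ediv_add_emod ((p-μ)*ℓ) p
  -- p * (ℓ - q1 - q2) = r1 + r2 ∈ [2, 2p-2] → ℓ - q1 - q2 = 1
  have key : ℓ - μ*ℓ/p - (p-μ)*ℓ/p - 1 = 0 := by
    apply mulcancel p _ hp0 <;> nlinarith
  linarith

include hp3 hℓ1 hℓp in
lemma fle {μ : ℤ} (h1 : 1 ≤ μ) (h2 : μ ≤ p - 1) : μ * ℓ / p ≤ μ - 1 := by
  have hp0 : (0:ℤ) < p := by omega
  have h3 : μ * ℓ ≤ μ * (p-1) := by nlinarith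
  have h4 : μ * (p-1) / p = μ - 1 := by
    have : μ * (p-1) = (p - μ) + p * (μ - 1) := by ring
    rw [this, Int.add_mul_ediv_left _ _ (ne_of_gt hp0), Int.ediv_eq_zero_of_lt (by omega) (by omega)]
    ring
  calc μ * ℓ / p ≤ μ * (p-1) / p := Int.ediv_le_ediv hp0 h3
  _ = μ - 1 := h4

include hp3 hℓ1 hℓp in
lemma fnonneg {μ : ℤ} (h1 : 1 ≤ μ) : 0 ≤ μ * ℓ / p :=
  Int.ediv_nonneg (by nlinarith) (by omega)

-- generic cover: explicit witness μ
include hp3 hq hℓ1 hℓp in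
lemma coverW {μ μ' σ : ℤ} (hμ1 : 1 ≤ μ) (hμ2 : μ ≤ p - 1) (hμ'1 : 1 ≤ μ') (hμ'2 : μ' ≤ p - 1)
    (h1 : μ * ℓ / p + μ' * ℓ / p ≤ σ) (h2 : σ ≤ (μ + μ') * q - 4) :
    (σ, μ + μ') ∈ indexSetA p q ℓ + indexSetA p q ℓ := by
  have f1 := fle hp3 hℓ1 hℓp hμ1 hμ2
  have f2 := fle hp3 hℓ1 hℓp hμ'1 hμ'2
  refine Set.mem_add.mpr ⟨(max (μ * ℓ / p) (σ - (μ' * q - 2)), μ), ?_,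
    (σ - max (μ * ℓ / p) (σ - (μ' * q - 2)), μ'), ?_, ?_⟩
  · refine ⟨hμ1, hμ2, le_max_left _ _, ?_⟩
    dsimp only
    simp only [max_le_iff]
    constructor <;> nlinarith
  · refine ⟨hμ'1, hμ'2, ?_, ?_⟩ <;> dsimp only
    · rcases max_cases (μ * ℓ / p) (σ - (μ' * q - 2)) with ⟨h, _⟩ | ⟨h, _⟩ <;> rw [h]
      · linarith
      · nlinarith
    · rcases max_cases (μ * ℓ / p) (σ - (μ' * q - 2)) with ⟨h, h'⟩ | ⟨h, h'⟩ <;> rw [h] <;> linarith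
  · simp [Prod.ext_iff]

-- generic lower bound on members of A+A
include hp hp3 hq hℓ1 hℓp in
lemma memAA_bounds {x : ℤ × ℤ} (hx : x ∈ indexSetA p q ℓ + indexSetA p q ℓ) :
    2 ≤ x.2 ∧ x.2 ≤ 2*p - 2 ∧ x.2 * ℓ / p - 1 ≤ x.1 ∧ x.1 ≤ x.2 * q - 4 := by
  have hp0 : (0:ℤ) < p := by omega
  rcases Set.mem_add.mp hx with ⟨a, ha, b, hb, hab⟩
  obtain ⟨ha1, ha2, ha3, ha4⟩ := ha
  obtain ⟨hb1, hb2, hb3, hb4⟩ := hb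
  have hx1 : x.1 = a.1 + b.1 := by rw [← hab]; rfl
  have hx2 : x.2 = a.2 + b.2 := by rw [← hab]; rfl
  have hsum : x.2 * ℓ = a.2 * ℓ + b.2 * ℓ := by rw [hx2]; ring
  have hdiv : x.2 * ℓ / p ≤ a.2 * ℓ / p + b.2 * ℓ / p + 1 := by
    rcases lt_or_ge (a.2 * ℓ % p + b.2 * ℓ % p) p with h | h
    · rw [hsum, ediv_add_lt p _ _ hp0 h]; omega
    · rw [hsum, ediv_add_ge p _ _ hp0 h]
  have hq2 : x.2 * q = a.2 * q + b.2 * q := by rw [hx2]; ring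
  refine ⟨by omega, by omega, by linarith, by linarith⟩


-- witness: if ℓ ≤ p - 2 there is T0 ∈ [2,p-2] with T0*ℓ % p = p - 1
include hp hp3 hℓ1 in
lemma exists_T0 (hℓ2 : 2 ≤ ℓ) (hℓp' : ℓ ≤ p - 2) :
    ∃ T0 : ℤ, 2 ≤ T0 ∧ T0 ≤ p - 2 ∧ T0 * ℓ % p = p - 1 := by
  have hp0 : (0:ℤ) < p := by omega
  have hcop : IsCoprime ℓ p := by
    refine ((Prime.coprime_iff_not_dvd hp).mpr ?_).symm
    intro h; have := Int.le_of_dvd (by omega) h; omega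
  obtain ⟨u, v, huv⟩ := hcop
  set T0 := (-u) % p with hT0
  have h0 : 0 ≤ T0 := Int.emod_nonneg _ (ne_of_gt hp0)
  have hlt : T0 < p := Int.emod_lt_of_pos _ hp0
  have hTu : T0 = -u - p * ((-u)/p) := by
    have := Int.mul_ediv_add_emod (-u) p; omega
  have hres : T0 * ℓ % p = p - 1 := by
    have hr0 := Int.emod_nonneg (T0*ℓ) (ne_of_gt hp0)
    have hrl := Int.emod_lt_of_pos (T0*ℓ) hp0
    have hd := Int.mul_ediv_add_emod (T0*ℓ) p
    -- T0*ℓ = p * (v - ℓ*((-u)/p)) - 1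
    have hval : T0 * ℓ = p * (v - ℓ*((-u)/p)) - 1 := by
      rw [hTu]; nlinarith [huv]
    have key : T0*ℓ/p - (v - ℓ*((-u)/p)) + 1 = 0 := by
      apply mulcancel p _ hp0 <;> nlinarith
    nlinarith
  refine ⟨T0, ?_, ?_, hres⟩
  · -- T0 ≠ 0 and T0 ≠ 1
    rcases eq_or_lt_of_le h0 with h | h
    · exfalso; rw [← h] at hres; simp at hres; omega
    rcases eq_or_lt_of_le (show (1:ℤ) ≤ T0 by omega) with h1 | h1
    · exfalso; rw [← h1, one_mul, Int.emod_eq_of_lt (by omega) (by omega)] at hres; omega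
    omega
  · -- T0 ≠ p - 1
    rcases eq_or_lt_of_le (show T0 ≤ p - 1 by omega) with h1 | h1
    · exfalso
      have : (p-1) * ℓ % p = p - ℓ := by
        have : (p-1)*ℓ = (p - ℓ) + p * (ℓ - 1) := by ring
        rw [this, Int.add_mul_emod_self_left, Int.emod_eq_of_lt (by omega) (by omega)]
      rw [h1, this] at hres; omega
    omega

include hp hp3 hℓ1 hℓp in
lemma noCarry_of_res (T : ℤ) (hres : T * ℓ % p = p - 1) : noCarry p ℓ T := by
  intro μ h1 h2 h3 h4
  have hp0 : (0:ℤ) < p := by omega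
  have r1 := res_pos hp hp3 hℓ1 hℓp h1 h2
  have r2 := res_pos hp hp3 hℓ1 hℓp h3 h4
  have l1 := Int.emod_lt_of_pos (μ*ℓ) hp0
  have l2 := Int.emod_lt_of_pos ((T-μ)*ℓ) hp0
  have hd := carry_decomp p ℓ T μ hp0
  rw [hres] at hd
  -- r1 + r2 = p - 1 + p*k, r1+r2 ∈ [2,2p-2] → k = 0
  set k := T*ℓ/p - μ*ℓ/p - (T-μ)*ℓ/p with hk
  have hk0 : k = 0 := by apply mulcancel p _ hp0 <;> nlinarith
  rw [hk0, mul_zero, add_zero] at hd; omega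

include hp hp3 hℓ1 hℓp in
lemma noCarry_shift (T : ℤ) (hres : T * ℓ % p = p - 1) : noCarry p ℓ (T + p) := by
  apply noCarry_of_res hp hp3 hℓ1 hℓp
  have hp0 : (0:ℤ) < p := by omega
  have : (T+p)*ℓ = T*ℓ + p*ℓ := by ring
  rw [this, Int.add_mul_emod_self_left, hres]

include hp3 hℓ1 hq in
lemma noCarry_p1 (hℓ : ℓ = p - 1) : noCarry p ℓ (p + 1) := by
  intro μ h1 h2 h3 h4
  have hp0 : (0:ℤ) < p := by omega
  have rμ : ∀ ν : ℤ, 1 ≤ ν → ν ≤ p - 1 → ν * ℓ % p = p - ν := by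
    intro ν hν1 hν2
    have : ν * ℓ = (p - ν) + p * (ν - 1) := by rw [hℓ]; ring
    rw [this, Int.add_mul_emod_self_left, Int.emod_eq_of_lt (by omega) (by omega)]
  rw [rμ μ h1 h2, rμ (p+1-μ) h3 h4]
  omega

-- refined lower bound with eF
include hp hp3 hq hℓ1 hℓp in
lemma memAA_lower {x : ℤ × ℤ} (hx : x ∈ indexSetA p q ℓ + indexSetA p q ℓ) :
    x.2 * ℓ / p - 1 + eF p ℓ x.2 ≤ x.1 := by
  have hp0 : (0:ℤ) < p := by omega
  by_cases hnc : noCarry p ℓ x.2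
  · rcases Set.mem_add.mp hx with ⟨a, ha, b, hb, hab⟩
    obtain ⟨ha1, ha2, ha3, ha4⟩ := ha
    obtain ⟨hb1, hb2, hb3, hb4⟩ := hb
    have hx1 : x.1 = a.1 + b.1 := by rw [← hab]; rfl
    have hx2 : x.2 = a.2 + b.2 := by rw [← hab]; rfl
    have hcar := hnc a.2 ha1 ha2 (by omega) (by omega)
    have heF : eF p ℓ x.2 = 1 := by unfold eF; rw [if_pos hnc]
    have hsum : x.2 * ℓ = a.2 * ℓ + b.2 * ℓ := by rw [hx2]; ring
    have : x.2 - a.2 = b.2 := by omega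
    rw [this] at hcar
    have hdiv : x.2 * ℓ / p = a.2 * ℓ / p + b.2 * ℓ / p := by
      rw [hsum, ediv_add_lt p _ _ hp0 hcar]
    rw [heF]; linarith
  · have heF : eF p ℓ x.2 = 0 := by unfold eF; rw [if_neg hnc]
    have := (memAA_bounds hp hp3 hq hℓ1 hℓp hx).2.2.1
    rw [heF]; linarith

-- cover with eF
include hp3 hq hℓ1 hℓp in
lemma coverE {T σ : ℤ} (hT1 : 2 ≤ T) (hT2 : T ≤ 2*p - 2)
    (h1 : T * ℓ / p - 1 + eF p ℓ T ≤ σ) (h2 : σ ≤ T * q - 4) :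
    (σ, T) ∈ indexSetA p q ℓ + indexSetA p q ℓ := by
  have hp0 : (0:ℤ) < p := by omega
  by_cases hnc : noCarry p ℓ T
  · have heF : eF p ℓ T = 1 := by unfold eF; rw [if_pos hnc]
    rw [heF] at h1
    set μ := max 1 (T - (p-1)) with hμ
    have hμ1 : 1 ≤ μ := le_max_left _ _
    have hμ2 : μ ≤ p - 1 := by omega
    have hμ'1 : 1 ≤ T - μ := by omega
    have hμ'2 : T - μ ≤ p - 1 := by omega
    have hsum : T * ℓ = μ * ℓ + (T - μ) * ℓ := by ring
    have hfl : μ * ℓ / p + (T - μ) * ℓ / p ≤ T * ℓ / p := by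
      rcases lt_or_ge (μ * ℓ % p + (T - μ) * ℓ % p) p with h | h
      · rw [hsum, ediv_add_lt p _ _ hp0 h]
      · rw [hsum, ediv_add_ge p _ _ hp0 h]; omega
    have := coverW hp3 hq hℓ1 hℓp (σ := σ) hμ1 hμ2 hμ'1 hμ'2 (by linarith) (by
      have : μ + (T - μ) = T := by ring
      rw [this]; linarith)
    have hT : μ + (T - μ) = T := by ring
    rwa [hT] at this
  · have heF : eF p ℓ T = 0 := by unfold eF; rw [if_neg hnc]
    rw [heF] at h1
    unfold noCarry at hnc
    push_neg at hnc
    obtain ⟨μ, hμ1, hμ2, hμ'1, hμ'2, hcar⟩ := hnc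
    have hsum : T * ℓ = μ * ℓ + (T - μ) * ℓ := by ring
    have hfl : μ * ℓ / p + (T - μ) * ℓ / p = T * ℓ / p - 1 := by
      rw [hsum, ediv_add_ge p _ _ hp0 hcar]; ring
    have := coverW hp3 hq hℓ1 hℓp (σ := σ) hμ1 hμ2 hμ'1 hμ'2 (by linarith) (by
      have : μ + (T - μ) = T := by ring
      rw [this]; linarith)
    have hT : μ + (T - μ) = T := by ring
    rwa [hT] at this

-- membership in C(0) for small rows, ℓ ≥ 2
include hp hp3 hq hℓ1 hℓp in
lemma memC2 (hℓ2 : 2 ≤ ℓ) {x : ℤ × ℤ} (hx : x ∈ indexSetA p q ℓ + indexSetA p q ℓ)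
    (hTs : x.2 ≤ p - 2) (hlow : x.2 * ℓ / p - 1 + eF p ℓ (x.2 + p) ≤ x.1) :
    x ∈ setC p q ℓ 0 := by
  have hp0 : (0:ℤ) < p := by omega
  obtain ⟨hT1, hT2, hxl, hxu⟩ := memAA_bounds hp hp3 hq hℓ1 hℓp hx
  have hdiv : (x.2 + p) * ℓ / p = x.2 * ℓ / p + ℓ := by
    have : (x.2 + p) * ℓ = x.2 * ℓ + p * ℓ := by ring
    rw [this, Int.add_mul_ediv_left _ _ (ne_of_gt hp0)]
  have hpq : ℓ ≤ p * q := by nlinarith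
  refine ⟨hx, ?_, ?_⟩
  · apply coverE hp3 hq hℓ1 hℓp (by omega) (by omega)
    · rw [hdiv]; linarith
    · have : (x.2 + p) * q = x.2 * q + p * q := by ring
      rw [this]; linarith
  · intro j hj1 hj2
    have hjm : jMin p ℓ 0 = p := by unfold jMin; rw [if_neg (by omega)]; ring
    rw [hjm] at hj1
    have h0 : x.2 + p - 0 = x.2 + p := by ring
    rw [h0]
    have h2 : j ≤ p * q := by
      have hh : (p - 0) * q = p * q := by ring
      rwa [hh] at hj2
    refine coverE hp3 hq hℓ1 hℓp (by omega) (by omega) ?_ ?_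
    · rw [hdiv]
      rcases eF_cases p ℓ (x.2 + p) with h | h <;> rw [h] at hlow ⊢ <;> linarith
    · have h1 : (x.2 + p) * q = x.2 * q + p * q := by ring
      rw [h1]; linarith

-- ℓ = 1 case lemmas
include hp hp3 hq in
lemma memAA_nonneg1 (hℓ : ℓ = 1) {x : ℤ × ℤ} (hx : x ∈ indexSetA p q ℓ + indexSetA p q ℓ) :
    0 ≤ x.1 := by
  rcases Set.mem_add.mp hx with ⟨a, ha, b, hb, hab⟩
  obtain ⟨ha1, ha2, ha3, ha4⟩ := ha
  obtain ⟨hb1, hb2, hb3, hb4⟩ := hb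
  have hx1 : x.1 = a.1 + b.1 := by rw [← hab]; rfl
  have n1 : 0 ≤ a.2 * ℓ / p := Int.ediv_nonneg (by nlinarith) (by omega)
  have n2 : 0 ≤ b.2 * ℓ / p := Int.ediv_nonneg (by nlinarith) (by omega)
  linarith

include hp hp3 hq in
lemma memC1 (hℓ : ℓ = 1) {x : ℤ × ℤ} (hx : x ∈ indexSetA p q ℓ + indexSetA p q ℓ)
    (hTs : x.2 ≤ p - 2) : x ∈ setC p q ℓ 0 := by
  have hp0 : (0:ℤ) < p := by omega
  have hℓ1 : 1 ≤ ℓ := by omega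
  have hℓp : ℓ ≤ p - 1 := by omega
  obtain ⟨hT1, hT2, hxl, hxu⟩ := memAA_bounds hp hp3 hq hℓ1 hℓp hx
  have hx0 := memAA_nonneg1 hp hp3 hq hℓ (ℓ := ℓ) hx
  have hz : ∀ ν : ℤ, 1 ≤ ν → ν ≤ p - 1 → ν * ℓ / p = 0 := by
    intro ν h1 h2
    rw [hℓ, mul_one]; exact Int.ediv_eq_zero_of_lt (by omega) (by omega)
  have cover1 : ∀ σ T : ℤ, p + 2 ≤ T → T ≤ 2*p - 2 → 0 ≤ σ → σ ≤ T * q - 4 →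
      (σ, T) ∈ indexSetA p q ℓ + indexSetA p q ℓ := by
    intro σ T h1 h2 h3 h4
    have := coverW hp3 hq hℓ1 hℓp (σ := σ) (μ := T - (p-1)) (μ' := p - 1)
      (by omega) (by omega) (by omega) (by omega)
      (by rw [hz _ (by omega) (by omega), hz _ (by omega) (by omega)]; omega)
      (by have : (T - (p-1)) + (p-1) = T := by ring
          rw [this]; omega)
    have hT : (T - (p-1)) + (p-1) = T := by ring
    rwa [hT] at this
  have hpq : 2*p ≤ p * q := by nlinarith
  refine ⟨hx, ?_, ?_⟩
  · apply cover1 _ _ (by omega) (by omega) (by omega)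
    have : (x.2 + p) * q = x.2 * q + p * q := by ring
    omega
  · intro j hj1 hj2
    have hjm : jMin p ℓ 0 = 0 := by unfold jMin; rw [if_pos hℓ]
    rw [hjm] at hj1
    have h0 : x.2 + p - 0 = x.2 + p := by ring
    rw [h0]
    apply cover1 _ _ (by omega) (by omega) (by omega)
    have h1 : (x.2 + p) * q = x.2 * q + p * q := by ring
    have h2 : (p - 0) * q = p * q := by ring
    rw [h2] at hj2
    omega

end

/-- for a prime `p ≥ 3`, `q ≥ 2`, `1 ≤ ℓ ≤ p - 1` and
`g = ∑_{μ=1}^{p-1} (μq - ⌊μℓ/p⌋ - 1)`, one has `|(A + A) \ C(0)| ≤ 3(g - 1)`. -/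
theorem card_minkowski_sdiff_C0_le (p q ℓ : ℤ) (hp : Prime p) (hp3 : 3 ≤ p) (hq : 2 ≤ q)
    (hℓ1 : 1 ≤ ℓ) (hℓp : ℓ ≤ p - 1) (g : ℤ)
    (hg : g = ∑ μ ∈ Finset.Icc (1 : ℤ) (p - 1), (μ * q - μ * ℓ / p - 1)) :
    (((indexSetA p q ℓ + indexSetA p q ℓ) \ setC p q ℓ 0).ncard : ℤ) ≤ 3 * (g - 1) := by
  have hp0 : (0:ℤ) < p := by omega
  set Sμ : ℤ := ∑ i ∈ Icc (1:ℤ) (p-1), i with hSμdef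
  have hSμ : 2 * Sμ = (p-1) * p := by
    rw [hSμdef, gauss 1 (p-1) (by omega)]; ring
  set Sb : ℤ := ∑ i ∈ Icc (p-1) (2*p-2), i with hSbdef
  have hSb : 2 * Sb = p * (3*p - 3) := by
    rw [hSbdef, gauss (p-1) (2*p-2) (by omega)]; ring
  have hSb3 : Sb = 3 * Sμ := by
    have hr : p * (3*p - 3) = 3 * ((p-1) * p) := by ring
    omega
  by_cases hℓ : ℓ = 1
  · -- ℓ = 1 case
    subst hℓ
    set F1 : Finset (ℤ × ℤ) :=
      (Icc (p-1) (2*p-2)).biUnion (fun T => (Icc (0:ℤ) (T*q-4)).image (fun ρ => (ρ, T))) with hF1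
    have hsub : (indexSetA p q 1 + indexSetA p q 1) \ setC p q 1 0 ⊆ ↑F1 := by
      intro x hx
      obtain ⟨hxA, hxC⟩ := hx
      obtain ⟨hT1, hT2, _, hxu⟩ := memAA_bounds hp hp3 hq (by omega) (by omega) hxA
      have hTl : p - 1 ≤ x.2 := by
        by_contra hcon
        exact hxC (memC1 hp hp3 hq rfl hxA (by omega))
      have hx0 := memAA_nonneg1 hp hp3 hq rfl hxA
      refine Finset.mem_coe.mpr (Finset.mem_biUnion.mpr ⟨x.2, mem_Icc.mpr ⟨hTl, hT2⟩, ?_⟩)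
      exact Finset.mem_image.mpr ⟨x.1, mem_Icc.mpr ⟨hx0, hxu⟩, Prod.mk.eta⟩
    have hncard : ((((indexSetA p q 1 + indexSetA p q 1) \ setC p q 1 0).ncard : ℤ)) ≤
        (F1.card : ℤ) := by
      have := Set.ncard_le_ncard hsub F1.finite_toSet
      rw [Set.ncard_coe_finset] at this
      exact_mod_cast this
    have hcard1 : (F1.card : ℤ) ≤ ∑ T ∈ Icc (p-1) (2*p-2), (T*q - 3) := by
      calc (F1.card : ℤ) ≤
          ((∑ T ∈ Icc (p-1) (2*p-2), ((Icc (0:ℤ) (T*q-4)).image (fun ρ => (ρ, T))).card : ℕ) : ℤ) := by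
            exact_mod_cast Finset.card_biUnion_le
        _ = ∑ T ∈ Icc (p-1) (2*p-2), (((Icc (0:ℤ) (T*q-4)).image (fun ρ => (ρ, T))).card : ℤ) := by
            push_cast; ring
        _ ≤ ∑ T ∈ Icc (p-1) (2*p-2), (T*q - 3) := by
            apply Finset.sum_le_sum
            intro T hT
            rw [mem_Icc] at hT
            have h1 : (((Icc (0:ℤ) (T*q-4)).image (fun ρ => (ρ, T))).card : ℤ) ≤
                ((Icc (0:ℤ) (T*q-4)).card : ℤ) := by exact_mod_cast Finset.card_image_le
            have h2 := card_Icc_int 0 (T*q-4)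
            have h3 : T*q ≥ 4 := by nlinarith
            rw [h2] at h1
            omega
    have hsum1 : ∑ T ∈ Icc (p-1) (2*p-2), (T*q - 3) = Sb * q - 3 * p := by
      rw [Finset.sum_sub_distrib, ← Finset.sum_mul, Finset.sum_const, nsmul_eq_mul, card_Icc_int]
      have hm : max (2*p-2+1-(p-1)) 0 = p := by omega
      rw [hm, ← hSbdef]; ring
    have hg1 : g = Sμ * q - (p - 1) := by
      rw [hg]
      have hcg : ∀ μ ∈ Icc (1:ℤ) (p-1), μ * q - μ * 1 / p - 1 = μ * q - 1 := by
        intro μ hμ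
        rw [mem_Icc] at hμ
        rw [mul_one, Int.ediv_eq_zero_of_lt (by omega) (by omega)]
        ring
      rw [Finset.sum_congr rfl hcg, Finset.sum_sub_distrib, ← Finset.sum_mul,
        Finset.sum_const, nsmul_eq_mul, card_Icc_int]
      have hm : max (p-1+1-1) 0 = p - 1 := by omega
      rw [hm, ← hSμdef]; ring
    have hprod : Sb * q = 3 * (Sμ * q) := by rw [hSb3]; ring
    linarith
  · -- ℓ ≥ 2 case
    have hℓ2 : 2 ≤ ℓ := by omega
    have hwit : 1 ≤ eF p ℓ (p+1) + ∑ T ∈ Icc (2:ℤ) (p-2), (eF p ℓ T * eF p ℓ (T+p)) := by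
      have hterm_nonneg : ∀ T ∈ Icc (2:ℤ) (p-2), 0 ≤ eF p ℓ T * eF p ℓ (T+p) := by
        intro T _
        rcases eF_cases p ℓ T with h | h <;> rcases eF_cases p ℓ (T+p) with h' | h' <;>
          rw [h, h'] <;> norm_num
      rcases eq_or_lt_of_le hℓp with hℓe | hℓlt
      · have h1 : eF p ℓ (p+1) = 1 := by
          unfold eF; rw [if_pos (noCarry_p1 (q := q) hp3 hq hℓ1 hℓe)]
        have h2 : 0 ≤ ∑ T ∈ Icc (2:ℤ) (p-2), (eF p ℓ T * eF p ℓ (T+p)) :=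
          Finset.sum_nonneg hterm_nonneg
        omega
      · obtain ⟨T0, hT01, hT02, hT0res⟩ := exists_T0 hp hp3 hℓ1 hℓ2 (by omega)
        have he1 : eF p ℓ T0 = 1 := by
          unfold eF; rw [if_pos (noCarry_of_res hp hp3 hℓ1 hℓp T0 hT0res)]
        have he2 : eF p ℓ (T0+p) = 1 := by
          unfold eF; rw [if_pos (noCarry_shift hp hp3 hℓ1 hℓp T0 hT0res)]
        have hsingle : eF p ℓ T0 * eF p ℓ (T0+p) ≤
            ∑ T ∈ Icc (2:ℤ) (p-2), (eF p ℓ T * eF p ℓ (T+p)) :=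
          Finset.single_le_sum hterm_nonneg (mem_Icc.mpr ⟨hT01, hT02⟩)
        have h3 : 0 ≤ eF p ℓ (p+1) := by rcases eF_cases p ℓ (p+1) with h | h <;> omega
        rw [he1, he2] at hsingle
        omega
    set Fs : Finset (ℤ × ℤ) := (Icc (2:ℤ) (p-2)).biUnion
      (fun T => (Icc (T*ℓ/p - 1 + eF p ℓ T) (T*ℓ/p - 2 + eF p ℓ (T+p))).image (fun ρ => (ρ, T)))
      with hFs
    set Fb : Finset (ℤ × ℤ) := (Icc (p-1) (2*p-2)).biUnion
      (fun T => (Icc (T*ℓ/p - 1 + eF p ℓ T) (T*q - 4)).image (fun ρ => (ρ, T))) with hFb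
    have hsub : (indexSetA p q ℓ + indexSetA p q ℓ) \ setC p q ℓ 0 ⊆ ↑(Fs ∪ Fb) := by
      intro x hx
      obtain ⟨hxA, hxC⟩ := hx
      obtain ⟨hT1, hT2, _, hxu⟩ := memAA_bounds hp hp3 hq hℓ1 hℓp hxA
      have hlow := memAA_lower hp hp3 hq hℓ1 hℓp hxA
      refine Finset.mem_coe.mpr (Finset.mem_union.mpr ?_)
      by_cases hTs : x.2 ≤ p - 2
      · left
        refine Finset.mem_biUnion.mpr ⟨x.2, mem_Icc.mpr ⟨hT1, hTs⟩, ?_⟩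
        refine Finset.mem_image.mpr ⟨x.1, mem_Icc.mpr ⟨hlow, ?_⟩, Prod.mk.eta⟩
        by_contra hcon
        exact hxC (memC2 hp hp3 hq hℓ1 hℓp hℓ2 hxA hTs (by omega))
      · right
        refine Finset.mem_biUnion.mpr ⟨x.2, mem_Icc.mpr ⟨by omega, hT2⟩, ?_⟩
        exact Finset.mem_image.mpr ⟨x.1, mem_Icc.mpr ⟨hlow, hxu⟩, Prod.mk.eta⟩
    have hncard : ((((indexSetA p q ℓ + indexSetA p q ℓ) \ setC p q ℓ 0).ncard : ℤ)) ≤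
        ((Fs ∪ Fb).card : ℤ) := by
      have := Set.ncard_le_ncard hsub (Fs ∪ Fb).finite_toSet
      rw [Set.ncard_coe_finset] at this
      exact_mod_cast this
    have hcardU : ((Fs ∪ Fb).card : ℤ) ≤ (Fs.card : ℤ) + (Fb.card : ℤ) := by
      exact_mod_cast Finset.card_union_le _ _
    have hFscard : (Fs.card : ℤ) ≤
        ∑ T ∈ Icc (2:ℤ) (p-2), (eF p ℓ (T+p) - eF p ℓ T * eF p ℓ (T+p)) := by
      calc (Fs.card : ℤ)
          ≤ ((∑ T ∈ Icc (2:ℤ) (p-2),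
              ((Icc (T*ℓ/p - 1 + eF p ℓ T) (T*ℓ/p - 2 + eF p ℓ (T+p))).image
                (fun ρ => (ρ, T))).card : ℕ) : ℤ) := by exact_mod_cast Finset.card_biUnion_le
        _ = ∑ T ∈ Icc (2:ℤ) (p-2),
              (((Icc (T*ℓ/p - 1 + eF p ℓ T) (T*ℓ/p - 2 + eF p ℓ (T+p))).image
                (fun ρ => (ρ, T))).card : ℤ) := by push_cast; ring
        _ ≤ _ := by
            apply Finset.sum_le_sum
            intro T hT
            have h1 : (((Icc (T*ℓ/p - 1 + eF p ℓ T) (T*ℓ/p - 2 + eF p ℓ (T+p))).image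
                (fun ρ => (ρ, T))).card : ℤ) ≤
                ((Icc (T*ℓ/p - 1 + eF p ℓ T) (T*ℓ/p - 2 + eF p ℓ (T+p))).card : ℤ) := by
              exact_mod_cast Finset.card_image_le
            rw [card_Icc_int] at h1
            rcases eF_cases p ℓ T with h | h <;> rcases eF_cases p ℓ (T+p) with h' | h' <;>
              rw [h, h'] at h1 ⊢ <;> omega
    have hFbcard : (Fb.card : ℤ) ≤
        ∑ T ∈ Icc (p-1) (2*p-2), (T*q - 2 - T*ℓ/p - eF p ℓ T) := by
      calc (Fb.card : ℤ)
          ≤ ((∑ T ∈ Icc (p-1) (2*p-2),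
              ((Icc (T*ℓ/p - 1 + eF p ℓ T) (T*q - 4)).image (fun ρ => (ρ, T))).card : ℕ) : ℤ) := by
            exact_mod_cast Finset.card_biUnion_le
        _ = ∑ T ∈ Icc (p-1) (2*p-2),
              (((Icc (T*ℓ/p - 1 + eF p ℓ T) (T*q - 4)).image (fun ρ => (ρ, T))).card : ℤ) := by
            push_cast; ring
        _ ≤ _ := by
            apply Finset.sum_le_sum
            intro T hT
            rw [mem_Icc] at hT
            have h1 : (((Icc (T*ℓ/p - 1 + eF p ℓ T) (T*q - 4)).image (fun ρ => (ρ, T))).card : ℤ) ≤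
                ((Icc (T*ℓ/p - 1 + eF p ℓ T) (T*q - 4)).card : ℤ) := by
              exact_mod_cast Finset.card_image_le
            rw [card_Icc_int] at h1
            have hdl : T*ℓ/p ≤ T - 1 := by
              rcases le_or_gt T p with hTp | hTp
              · have hle : T*ℓ ≤ T*(p-1) := by nlinarith
                have heq2 : T*(p-1) = (p - T) + p*(T-1) := by ring
                calc T*ℓ/p ≤ T*(p-1)/p := Int.ediv_le_ediv hp0 hle
                  _ = T - 1 := by
                    rw [heq2, Int.add_mul_ediv_left _ _ (ne_of_gt hp0),
                      Int.ediv_eq_zero_of_lt (by omega) (by omega)]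
                    ring
              · have hle : T*ℓ ≤ T*(p-1) := by nlinarith
                have heq2 : T*(p-1) = (2*p - T) + p*(T-2) := by ring
                have : T*ℓ/p ≤ T - 2 := by
                  calc T*ℓ/p ≤ T*(p-1)/p := Int.ediv_le_ediv hp0 hle
                    _ = T - 2 := by
                      rw [heq2, Int.add_mul_ediv_left _ _ (ne_of_gt hp0),
                        Int.ediv_eq_zero_of_lt (by omega) (by omega)]
                      ring
                omega
            have hTq : 2*T ≤ T*q := by nlinarith
            rcases eF_cases p ℓ T with h | h <;> rw [h] at h1 ⊢ <;> omega
    -- sum identities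
    set S1 : ℤ := ∑ T ∈ Icc (1:ℤ) (p-1), (T*ℓ/p) with hS1def
    have hS1 : 2 * S1 = (ℓ-1) * (p-1) := by
      have hrefl : ∑ T ∈ Icc (1:ℤ) (p-1), ((1 + (p-1) - T)*ℓ/p) =
          ∑ T ∈ Icc (1:ℤ) (p-1), (T*ℓ/p) := sum_reflect 1 (p-1) (fun T => T*ℓ/p)
      have h2S : 2 * S1 = ∑ T ∈ Icc (1:ℤ) (p-1), (T*ℓ/p + (1 + (p-1) - T)*ℓ/p) := by
        rw [Finset.sum_add_distrib, hrefl, hS1def]; ring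
      have hterm : ∀ T ∈ Icc (1:ℤ) (p-1), T*ℓ/p + (1 + (p-1) - T)*ℓ/p = ℓ - 1 := by
        intro T hT
        rw [mem_Icc] at hT
        have hps := pair_sum hp hp3 hℓ1 hℓp hT.1 hT.2
        have heq : 1 + (p-1) - T = p - T := by ring
        rw [heq]
        linarith
      rw [h2S, Finset.sum_congr rfl hterm, Finset.sum_const, nsmul_eq_mul, card_Icc_int]
      have hm : max (p-1+1-1) 0 = p - 1 := by omega
      rw [hm]; ring
    have h_pm1 : (p-1)*ℓ/p = ℓ - 1 := by
      have hps := pair_sum hp hp3 hℓ1 hℓp (le_refl 1) (by omega)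
      have h0 : (1:ℤ)*ℓ/p = 0 := by
        rw [one_mul]; exact Int.ediv_eq_zero_of_lt (by omega) (by omega)
      have heq : p - 1 = p - (1:ℤ) := by ring
      linarith [hps]
    -- big floor-sum identity
    have hBigS1 : ∑ T ∈ Icc (p-1) (2*p-2), (T*ℓ/p) = S1 + (p-1)*ℓ := by
      have hsplit : Icc (p-1) (2*p-2) = insert (p-1) (Icc p (2*p-2)) := by
        ext T; simp only [mem_insert, mem_Icc]; omega
      have hnotmem : (p-1) ∉ Icc p (2*p-2) := by simp only [mem_Icc]; omega
      rw [hsplit, Finset.sum_insert hnotmem]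
      have hmap : Icc p (2*p-2) = (Icc (0:ℤ) (p-2)).map (addRightEmbedding p) := by
        rw [Finset.map_add_right_Icc]; congr 1 <;> ring
      rw [hmap, Finset.sum_map]
      have hterm : ∀ T ∈ Icc (0:ℤ) (p-2),
          ((addRightEmbedding p) T)*ℓ/p = T*ℓ/p + ℓ := by
        intro T _
        have h1 : (addRightEmbedding p) T = T + p := rfl
        have h2 : (T + p)*ℓ = T*ℓ + p*ℓ := by ring
        rw [h1, h2, Int.add_mul_ediv_left _ _ (ne_of_gt hp0)]
      rw [Finset.sum_congr rfl hterm, Finset.sum_add_distrib, Finset.sum_const,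
        nsmul_eq_mul, card_Icc_int]
      have hm : max (p-2+1-0) 0 = p - 1 := by omega
      rw [hm]
      have hsplit0 : Icc (0:ℤ) (p-2) = insert 0 (Icc (1:ℤ) (p-2)) := by
        ext T; simp only [mem_insert, mem_Icc]; omega
      have hnm0 : (0:ℤ) ∉ Icc (1:ℤ) (p-2) := by simp only [mem_Icc]; omega
      have hS1split : S1 = (∑ T ∈ Icc (1:ℤ) (p-2), (T*ℓ/p)) + (ℓ - 1) := by
        have hsp : Icc (1:ℤ) (p-1) = insert (p-1) (Icc (1:ℤ) (p-2)) := by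
          ext T; simp only [mem_insert, mem_Icc]; omega
        have hnm : (p-1) ∉ Icc (1:ℤ) (p-2) := by simp only [mem_Icc]; omega
        rw [hS1def, hsp, Finset.sum_insert hnm, h_pm1]; ring
      rw [hsplit0, Finset.sum_insert hnm0]
      have h00 : (0:ℤ)*ℓ/p = 0 := by rw [zero_mul]; exact Int.zero_ediv p
      rw [h00, h_pm1]
      linarith [hS1split]
    -- shift identity for eF sums
    have hShift : ∑ T ∈ Icc (2:ℤ) (p-2), eF p ℓ (T+p) =
        ∑ T ∈ Icc (p+2) (2*p-2), eF p ℓ T := by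
      have hmap : Icc (p+2) (2*p-2) = (Icc (2:ℤ) (p-2)).map (addRightEmbedding p) := by
        rw [Finset.map_add_right_Icc]; congr 1 <;> ring
      rw [hmap, Finset.sum_map]
      rfl
    -- split big eF sum
    have hBigE : ∑ T ∈ Icc (p-1) (2*p-2), eF p ℓ T =
        eF p ℓ (p-1) + eF p ℓ p + eF p ℓ (p+1) + ∑ T ∈ Icc (p+2) (2*p-2), eF p ℓ T := by
      have hsp : Icc (p-1) (2*p-2) =
          insert (p-1) (insert p (insert (p+1) (Icc (p+2) (2*p-2)))) := by
        ext T; simp only [mem_insert, mem_Icc]; omega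
      rw [hsp, Finset.sum_insert (by simp only [mem_insert, mem_Icc]; omega),
        Finset.sum_insert (by simp only [mem_insert, mem_Icc]; omega),
        Finset.sum_insert (by simp only [mem_Icc]; omega)]
      ring
    -- expand the big-row sum
    have hBigExp : ∑ T ∈ Icc (p-1) (2*p-2), (T*q - 2 - T*ℓ/p - eF p ℓ T) =
        Sb * q - 2*p - (S1 + (p-1)*ℓ)
          - (eF p ℓ (p-1) + eF p ℓ p + eF p ℓ (p+1) + ∑ T ∈ Icc (p+2) (2*p-2), eF p ℓ T) := by
      rw [Finset.sum_sub_distrib, Finset.sum_sub_distrib, Finset.sum_sub_distrib,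
        ← Finset.sum_mul, Finset.sum_const, nsmul_eq_mul, card_Icc_int, hBigS1, hBigE,
        ← hSbdef]
      have hm : max (2*p-2+1-(p-1)) 0 = p := by omega
      rw [hm]
      ring
    -- expand the small-row sum
    have hSmallExp : ∑ T ∈ Icc (2:ℤ) (p-2), (eF p ℓ (T+p) - eF p ℓ T * eF p ℓ (T+p)) =
        (∑ T ∈ Icc (p+2) (2*p-2), eF p ℓ T)
          - ∑ T ∈ Icc (2:ℤ) (p-2), (eF p ℓ T * eF p ℓ (T+p)) := by
      rw [Finset.sum_sub_distrib, hShift]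
    -- expand g
    have hgexp : g = Sμ * q - S1 - (p-1) := by
      rw [hg, Finset.sum_sub_distrib, Finset.sum_sub_distrib, ← Finset.sum_mul,
        Finset.sum_const, nsmul_eq_mul, card_Icc_int, ← hSμdef, ← hS1def]
      have hm : max (p-1+1-1) 0 = p - 1 := by omega
      rw [hm]; ring
    have hprod : Sb * q = 3 * (Sμ * q) := by rw [hSb3]; ring
    have hexp : (ℓ-1)*(p-1) = (p-1)*ℓ - p + 1 := by ring
    have he1 : 0 ≤ eF p ℓ (p-1) := by rcases eF_cases p ℓ (p-1) with h | h <;> omega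
    have he2 : 0 ≤ eF p ℓ p := by rcases eF_cases p ℓ p with h | h <;> omega
    rw [hSmallExp] at hFscard
    rw [hBigExp] at hFbcard
    linarith
end

section
/- Let p be a prime and 1 ≤ ℓ ≤ p−1 an integer. For all integers T and α with α ≥ 0, 2 ≤ T, and T + α ≤ 2(p−1), one has b(T + α) ≤ b(T) + α. -/
lemma floor_shift (p ℓ μ δ : ℤ) (hp : 0 < p) (hℓ : ℓ ≤ p) (hδ : 0 ≤ δ) :
    (μ + δ) * ℓ / p ≤ μ * ℓ / p + δ := by
  have h1 : (μ + δ) * ℓ ≤ μ * ℓ + δ * p := by nlinarith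
  calc (μ + δ) * ℓ / p ≤ (μ * ℓ + δ * p) / p := Int.ediv_le_ediv hp h1
    _ = μ * ℓ / p + δ := Int.add_mul_ediv_right _ _ (ne_of_gt hp)

/-- for all integers `T, α` with `α ≥ 0`, `2 ≤ T` and `T + α ≤ 2(p-1)`,
one has `b(T + α) ≤ b(T) + α`. -/
theorem bLow_add_le (p ℓ : ℤ) (hp : Prime p) (hℓ1 : 1 ≤ ℓ) (hℓp : ℓ ≤ p - 1)
    (T α : ℤ) (hα : 0 ≤ α) (hT : 2 ≤ T) (hTα : T + α ≤ 2 * (p - 1)) :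
    bLow p ℓ (T + α) ≤ bLow p ℓ T + α := by
  have hp2 : 2 ≤ p := by omega
  have hp0 : (0:ℤ) < p := by omega
  -- set(T) is nonempty and bounded below
  have hbdd : ∀ S : ℤ, BddBelow {s : ℤ | ∃ μ μ' : ℤ, μ + μ' = S ∧ 1 ≤ μ ∧ μ ≤ p - 1 ∧
      1 ≤ μ' ∧ μ' ≤ p - 1 ∧ s = μ * ℓ / p + μ' * ℓ / p} := by
    intro S
    refine ⟨0, ?_⟩
    rintro s ⟨μ, μ', -, hμ1, -, hμ'1, -, rfl⟩
    have h1 : 0 ≤ μ * ℓ / p := Int.ediv_nonneg (by nlinarith) (le_of_lt hp0)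
    have h2 : 0 ≤ μ' * ℓ / p := Int.ediv_nonneg (by nlinarith) (le_of_lt hp0)
    omega
  have hne : {s : ℤ | ∃ μ μ' : ℤ, μ + μ' = T ∧ 1 ≤ μ ∧ μ ≤ p - 1 ∧
      1 ≤ μ' ∧ μ' ≤ p - 1 ∧ s = μ * ℓ / p + μ' * ℓ / p}.Nonempty := by
    refine ⟨max 1 (T - (p-1)) * ℓ / p + (T - max 1 (T - (p-1))) * ℓ / p,
      max 1 (T - (p-1)), T - max 1 (T - (p-1)), by omega, ?_, ?_, ?_, ?_, rfl⟩ <;> omega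
  -- the infimum is attained
  obtain ⟨μ, μ', hsum, hμ1, hμp, hμ'1, hμ'p, hval⟩ := Int.csInf_mem (s := _) hne (hbdd T)
  -- construct witness for T + α
  set δ := min α (p - 1 - μ) with hδdef
  have hδ0 : 0 ≤ δ := by omega
  have hδα : δ ≤ α := by omega
  have hν : 1 ≤ μ + δ ∧ μ + δ ≤ p - 1 ∧ 1 ≤ μ' + (α - δ) ∧ μ' + (α - δ) ≤ p - 1 := by
    rcases min_cases α (p - 1 - μ) with ⟨h, _⟩ | ⟨h, _⟩ <;> omega
  have hmem : (μ + δ) * ℓ / p + (μ' + (α - δ)) * ℓ / p ∈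
      {s : ℤ | ∃ ν ν' : ℤ, ν + ν' = T + α ∧ 1 ≤ ν ∧ ν ≤ p - 1 ∧
        1 ≤ ν' ∧ ν' ≤ p - 1 ∧ s = ν * ℓ / p + ν' * ℓ / p} :=
    ⟨μ + δ, μ' + (α - δ), by omega, hν.1, hν.2.1, hν.2.2.1, hν.2.2.2, rfl⟩
  have hle := csInf_le (hbdd (T + α)) hmem
  have h1 := floor_shift p ℓ μ δ hp0 (by omega) hδ0
  have h2 := floor_shift p ℓ μ' (α - δ) hp0 (by omega) (by omega)
  unfold bLow at *
  omega
end

section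
/- Let p be a prime and q ≥ 2, 1 ≤ ℓ ≤ p−1 integers. Then C(0) ⊆ C(i) for every integer i with 0 ≤ i ≤ p. -/
open Pointwise

/-- `ν * ℓ / p ≤ ν - 1` for `1 ≤ ν`, `1 ≤ ℓ ≤ p - 1`. -/
lemma aux_fdiv_le (p ℓ ν : ℤ) (hp : 0 < p) (hℓp : ℓ ≤ p - 1) (hν : 1 ≤ ν) :
    ν * ℓ / p ≤ ν - 1 := by
  have h1 : ν * ℓ ≤ (p - 1) + (ν - 1) * p := by nlinarith
  calc ν * ℓ / p ≤ ((p - 1) + (ν - 1) * p) / p := Int.ediv_le_ediv hp h1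
    _ = (p - 1) / p + (ν - 1) := Int.add_mul_ediv_right _ _ hp.ne'
    _ = ν - 1 := by rw [Int.ediv_eq_zero_of_lt (by omega) (by omega)]; ring

/-- Shift bound: `(ν + t) * ℓ / p ≤ ν * ℓ / p + t` for `0 ≤ t`, `ℓ ≤ p`. -/
lemma aux_fdiv_shift (p ℓ ν t : ℤ) (hp : 0 < p) (hℓp : ℓ ≤ p) (ht : 0 ≤ t) :
    (ν + t) * ℓ / p ≤ ν * ℓ / p + t := by
  have h1 : (ν + t) * ℓ ≤ ν * ℓ + t * p := by nlinarith
  calc (ν + t) * ℓ / p ≤ (ν * ℓ + t * p) / p := Int.ediv_le_ediv hp h1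
    _ = ν * ℓ / p + t := Int.add_mul_ediv_right _ _ hp.ne'

set_option maxHeartbeats 1000000 in
/-- `C(0) ⊆ C(i)` for every `0 ≤ i ≤ p`. -/
theorem setC_zero_subset (p q ℓ : ℤ) (hp : Prime p) (hq : 2 ≤ q)
    (hℓ1 : 1 ≤ ℓ) (hℓp : ℓ ≤ p - 1) (i : ℤ) (hi0 : 0 ≤ i) (hip : i ≤ p) :
    setC p q ℓ 0 ⊆ setC p q ℓ i := by
  rintro ⟨ρ, T⟩ ⟨h1, h2, _⟩
  have hp0 : (0 : ℤ) < p := by omega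
  refine ⟨h1, h2, ?_⟩
  intro j hj1 hj2
  rw [Set.mem_add] at h1 h2
  obtain ⟨⟨N, μ⟩, ⟨hμ1, hμ2, hN1, hN2⟩, ⟨N', μ'⟩, ⟨hμ'1, hμ'2, hN'1, hN'2⟩, hsum⟩ := h1
  obtain ⟨⟨M, ν⟩, ⟨hν1, hν2, _, _⟩, ⟨M', ν'⟩, ⟨hν'1, hν'2, _, _⟩, hsumB⟩ := h2
  dsimp only at hμ1 hμ2 hN1 hN2 hμ'1 hμ'2 hN'1 hN'2 hν1 hν2 hν'1 hν'2
  have e1 : N + N' = ρ := congrArg Prod.fst hsum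
  have e2 : μ + μ' = T := congrArg Prod.snd hsum
  have eB : ν + ν' = T + p := congrArg Prod.snd hsumB
  have hT : T ≤ p - 2 := by omega
  -- the shifts in the second coordinates
  set t : ℤ := min (p - i) (p - 1 - μ) with htdef
  set t' : ℤ := (p - i) - t with ht'def
  have ht0 : 0 ≤ t := by omega
  have htμ : μ + t ≤ p - 1 := by omega
  have ht'0 : 0 ≤ t' := by omega
  have ht'μ : μ' + t' ≤ p - 1 := by omega
  -- lower bounds (the "floor" values) for the two new elements
  have hflow : 0 ≤ (μ' + t') * ℓ / p :=
    Int.ediv_nonneg (mul_nonneg (by omega) (by omega)) (le_of_lt hp0)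
  have hone : (1 : ℤ) * 1 ≤ (μ + t) * (q - 1) :=
    mul_le_mul (by omega) (by omega) (by omega) (by omega)
  have hone' : (1 : ℤ) * 1 ≤ (μ' + t') * (q - 1) :=
    mul_le_mul (by omega) (by omega) (by omega) (by omega)
  have hup1 : (μ + t) * ℓ / p ≤ (μ + t) * q - 2 := by
    have h := aux_fdiv_le p ℓ (μ + t) hp0 hℓp (by omega)
    nlinarith [h, hone]
  have hup2 : (μ' + t') * ℓ / p ≤ (μ' + t') * q - 2 := by
    have h := aux_fdiv_le p ℓ (μ' + t') hp0 hℓp (by omega)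
    nlinarith [h, hone']
  -- key inequality: sum of new floors is at most ρ + j
  have hσ : (μ + t) * ℓ / p + (μ' + t') * ℓ / p ≤ ρ + j := by
    rcases eq_or_lt_of_le hℓ1 with hℓeq | hℓ2
    · -- ℓ = 1 : all floors are zero
      have hz1 : (μ + t) * ℓ / p = 0 := by
        rw [← hℓeq, mul_one]; exact Int.ediv_eq_zero_of_lt (by omega) (by omega)
      have hz2 : (μ' + t') * ℓ / p = 0 := by
        rw [← hℓeq, mul_one]; exact Int.ediv_eq_zero_of_lt (by omega) (by omega)
      have hjm : jMin p ℓ i = 0 := by simp [jMin, ← hℓeq]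
      have hρ0 : 0 ≤ ρ := by
        have ha : 0 ≤ μ * ℓ / p :=
          Int.ediv_nonneg (mul_nonneg (by omega) (by omega)) (le_of_lt hp0)
        have hb : 0 ≤ μ' * ℓ / p :=
          Int.ediv_nonneg (mul_nonneg (by omega) (by omega)) (le_of_lt hp0)
        omega
      omega
    · -- ℓ ≥ 2
      have hjm : jMin p ℓ i = p - i := by
        have : ℓ ≠ 1 := by omega
        simp [jMin, this]
      have hs1 : (μ + t) * ℓ / p ≤ μ * ℓ / p + t :=
        aux_fdiv_shift p ℓ μ t hp0 (by omega) ht0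
      have hs2 : (μ' + t') * ℓ / p ≤ μ' * ℓ / p + t' :=
        aux_fdiv_shift p ℓ μ' t' hp0 (by omega) ht'0
      omega
  -- upper bound for ρ + j
  have hupsum : ρ + j ≤ ((μ + t) * q - 2) + ((μ' + t') * q - 2) := by
    have htt : t + t' = p - i := by omega
    have key : (μ + t) * q + (μ' + t') * q = μ * q + μ' * q + (p - i) * q := by
      rw [← htt]; ring
    linarith [hN2, hN'2, hj2, key, e1]
  -- the first coordinate of the first new element
  set M₁ : ℤ := min (ρ + j - (μ' + t') * ℓ / p) ((μ + t) * q - 2) with hM₁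
  rw [Set.mem_add]
  refine ⟨(M₁, μ + t), ?_, (ρ + j - M₁, μ' + t'), ?_, ?_⟩
  · show 1 ≤ μ + t ∧ μ + t ≤ p - 1 ∧ (μ + t) * ℓ / p ≤ M₁ ∧ M₁ ≤ (μ + t) * q - 2
    exact ⟨by omega, by omega, by omega, by omega⟩
  · show 1 ≤ μ' + t' ∧ μ' + t' ≤ p - 1 ∧ (μ' + t') * ℓ / p ≤ ρ + j - M₁ ∧
      ρ + j - M₁ ≤ (μ' + t') * q - 2
    exact ⟨by omega, by omega, by omega, by omega⟩
  · rw [Prod.mk_add_mk, Prod.mk.injEq]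
    constructor <;> omega
end

section
/- Let F be a field, p ≥ 2, q ≥ 1 and 1 ≤ ℓ integers, and let A(t) ∈ F[t] be a polynomial of degree at most q; for 1 ≤ i ≤ p−1 write A(t)^{p−i} = Σ_{j=0}^{(p−i)q} c_{j,i} t^j. Let λ, x, X ∈ F with λ ≠ 0, X ≠ 0, A(x) ≠ 0 and λX + 1 ≠ 0; set y = A(x)·(λX + 1) and suppose y^p = λ^p x^ℓ + A(x)^p. Set D = (A(x)(λX+1))^{2(p−1)}. Then for all nonnegative integers N, N', μ, μ', N'', N''', μ'', μ''' and families (N_{i,j}, N'_{i,j}, μ_{i,j}, μ'_{i,j}) (for 1 ≤ i ≤ p−1 and 0 ≤ j ≤ (p−i)q) satisfying N'' + N''' = N + N' + ℓ, μ'' + μ''' = μ + μ' + p, and N_{i,j} + N'_{i,j} = N + N' + j, μ_{i,j} + μ'_{i,j} = μ + μ' + p − i for each (i,j), the following identity holds in F: x^{N+N'}(A(x)X)^{2(p−1)−(μ+μ')} D^{−1} − x^{N''+N'''}(A(x)X)^{2(p−1)−(μ''+μ''')} D^{−1} + Σ_{i=1}^{p−1} Σ_{j=0}^{(p−i)q}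 λ^{i−p}·binom(p,i)·c_{j,i}· x^{N_{i,j}+N'_{i,j}}(A(x)X)^{2(p−1)−(μ_{i,j}+μ'_{i,j})} D^{−1} = 0. -/
/-- the relative trinomial relations on the Bertin–Mézard model
`y = A(x)(λX + 1)` with `y^p = λ^p x^ℓ + A(x)^p`, where for `1 ≤ i ≤ p-1` one writes
`A(t)^{p-i} = ∑_{j=0}^{(p-i)q} c_{j,i} t^j` and `D = (A(x)(λX+1))^{2(p-1)}`. -/
theorem relative_trinomial_relation {F : Type*} [Field F]
    (p q ℓ : ℕ) (hp : 2 ≤ p) (hq : 1 ≤ q) (hℓ : 1 ≤ ℓ)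
    (A : Polynomial F) (hA : A.natDegree ≤ q)
    (lam x X : F) (hlam : lam ≠ 0) (hX : X ≠ 0) (hAx : A.eval x ≠ 0)
    (hlX : lam * X + 1 ≠ 0)
    (heq : (A.eval x * (lam * X + 1)) ^ p = lam ^ p * x ^ ℓ + (A.eval x) ^ p)
    (N N' μ μ' N'' N''' μ'' μ''' : ℕ)
    (Nij N'ij μij μ'ij : ℕ → ℕ → ℕ)
    (hN : N'' + N''' = N + N' + ℓ) (hμ : μ'' + μ''' = μ + μ' + p)
    (hNij : ∀ i, 1 ≤ i → i ≤ p - 1 → ∀ j ≤ (p - i) * q,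
      Nij i j + N'ij i j = N + N' + j)
    (hμij : ∀ i, 1 ≤ i → i ≤ p - 1 → ∀ j ≤ (p - i) * q,
      μij i j + μ'ij i j = μ + μ' + p - i) :
    x ^ (N + N') * (A.eval x * X) ^ ((2 * ((p : ℤ) - 1)) - ((μ : ℤ) + (μ' : ℤ)))
        * ((A.eval x * (lam * X + 1)) ^ (2 * (p - 1)))⁻¹
      - x ^ (N'' + N''') * (A.eval x * X) ^ ((2 * ((p : ℤ) - 1)) - ((μ'' : ℤ) + (μ''' : ℤ)))
        * ((A.eval x * (lam * X + 1)) ^ (2 * (p - 1)))⁻¹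
      + ∑ i ∈ Finset.Icc 1 (p - 1), ∑ j ∈ Finset.range ((p - i) * q + 1),
          lam ^ ((i : ℤ) - (p : ℤ)) * (p.choose i : F) * (A ^ (p - i)).coeff j *
            x ^ (Nij i j + N'ij i j) *
            (A.eval x * X) ^ ((2 * ((p : ℤ) - 1)) - ((μij i j : ℤ) + (μ'ij i j : ℤ))) *
            ((A.eval x * (lam * X + 1)) ^ (2 * (p - 1)))⁻¹ = 0 := by
  classical
  set a := A.eval x with ha_def
  have hw : a * X ≠ 0 := mul_ne_zero hAx hX
  set w : F := a * X with hw_def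
  set c : ℤ := 2 * ((p : ℤ) - 1) - ((μ : ℤ) + (μ' : ℤ)) with hc
  set K : F := x ^ (N + N') * w ^ (c - (p : ℤ)) *
      ((a * (lam * X + 1)) ^ (2 * (p - 1)))⁻¹ with hK
  -- Term 1
  have h1 : x ^ (N + N') * w ^ (2 * ((p : ℤ) - 1) - ((μ : ℤ) + (μ' : ℤ)))
      * ((a * (lam * X + 1)) ^ (2 * (p - 1)))⁻¹ = K * w ^ p := by
    have hcc : c = (c - (p : ℤ)) + (p : ℤ) := by ring
    rw [← hc, hcc, zpow_add₀ hw, zpow_natCast, hK]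
    ring
  -- Term 2
  have h2 : x ^ (N'' + N''') * w ^ (2 * ((p : ℤ) - 1) - ((μ'' : ℤ) + (μ''' : ℤ)))
      * ((a * (lam * X + 1)) ^ (2 * (p - 1)))⁻¹ = K * x ^ ℓ := by
    have he : 2 * ((p : ℤ) - 1) - ((μ'' : ℤ) + (μ''' : ℤ)) = c - (p : ℤ) := by
      rw [hc]; omega
    rw [he, hN, pow_add, hK]; ring
  -- inner evaluation
  have heval : ∀ i, 1 ≤ i → i ≤ p - 1 →
      ∑ j ∈ Finset.range ((p - i) * q + 1), (A ^ (p - i)).coeff j * x ^ j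
        = a ^ (p - i) := by
    intro i hi1 hi2
    have hdeg : (A ^ (p - i)).natDegree < (p - i) * q + 1 := by
      have h1 := Polynomial.natDegree_pow_le (p := A) (n := p - i)
      have h2 : (p - i) * A.natDegree ≤ (p - i) * q := Nat.mul_le_mul_left _ hA
      omega
    rw [← Polynomial.eval_eq_sum_range' hdeg, Polynomial.eval_pow]
  -- rewrite the double sum
  have hsum : (∑ i ∈ Finset.Icc 1 (p - 1), ∑ j ∈ Finset.range ((p - i) * q + 1),
        lam ^ ((i : ℤ) - (p : ℤ)) * (p.choose i : F) * (A ^ (p - i)).coeff j *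
          x ^ (Nij i j + N'ij i j) *
          w ^ (2 * ((p : ℤ) - 1) - ((μij i j : ℤ) + (μ'ij i j : ℤ))) *
          ((a * (lam * X + 1)) ^ (2 * (p - 1)))⁻¹)
      = K * ∑ i ∈ Finset.Icc 1 (p - 1),
          lam ^ ((i : ℤ) - (p : ℤ)) * (p.choose i : F) * a ^ (p - i) * w ^ i := by
    rw [Finset.mul_sum]
    refine Finset.sum_congr rfl ?_
    intro i hi
    rw [Finset.mem_Icc] at hi
    obtain ⟨hi1, hi2⟩ := hi
    have hstep : ∀ j ∈ Finset.range ((p - i) * q + 1),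
        lam ^ ((i : ℤ) - (p : ℤ)) * (p.choose i : F) * (A ^ (p - i)).coeff j *
          x ^ (Nij i j + N'ij i j) *
          w ^ (2 * ((p : ℤ) - 1) - ((μij i j : ℤ) + (μ'ij i j : ℤ))) *
          ((a * (lam * X + 1)) ^ (2 * (p - 1)))⁻¹
        = (K * (lam ^ ((i : ℤ) - (p : ℤ)) * (p.choose i : F) * w ^ i)) *
            ((A ^ (p - i)).coeff j * x ^ j) := by
      intro j hj
      rw [Finset.mem_range] at hj
      have hj' : j ≤ (p - i) * q := by omega
      have hNe := hNij i hi1 hi2 j hj'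
      have hμe := hμij i hi1 hi2 j hj'
      have hexp : 2 * ((p : ℤ) - 1) - ((μij i j : ℤ) + (μ'ij i j : ℤ))
          = (c - (p : ℤ)) + (i : ℤ) := by rw [hc]; omega
      rw [hexp, zpow_add₀ hw, zpow_natCast, hNe, pow_add, hK]
      ring
    rw [Finset.sum_congr rfl hstep, ← Finset.mul_sum, heval i hi1 hi2]
    ring
  rw [h1, h2, hsum]
  -- the key scalar identity
  have hlp : (lam : F) ^ p ≠ 0 := pow_ne_zero _ hlam
  have key : w ^ p - x ^ ℓ + ∑ i ∈ Finset.Icc 1 (p - 1),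
      lam ^ ((i : ℤ) - (p : ℤ)) * (p.choose i : F) * a ^ (p - i) * w ^ i = 0 := by
    have hmul : lam ^ p * (w ^ p - x ^ ℓ + ∑ i ∈ Finset.Icc 1 (p - 1),
        lam ^ ((i : ℤ) - (p : ℤ)) * (p.choose i : F) * a ^ (p - i) * w ^ i) = 0 := by
      have hS : lam ^ p * ∑ i ∈ Finset.Icc 1 (p - 1),
          lam ^ ((i : ℤ) - (p : ℤ)) * (p.choose i : F) * a ^ (p - i) * w ^ i
          = a ^ p * ∑ i ∈ Finset.Icc 1 (p - 1), (lam * X) ^ i * (p.choose i : F) := by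
        rw [Finset.mul_sum, Finset.mul_sum]
        refine Finset.sum_congr rfl ?_
        intro i hi
        rw [Finset.mem_Icc] at hi
        obtain ⟨hi1, hi2⟩ := hi
        have hip : i ≤ p := by omega
        have hl : lam ^ p * lam ^ ((i : ℤ) - (p : ℤ)) = lam ^ i := by
          rw [← zpow_natCast lam p, ← zpow_add₀ hlam]
          have h3 : (p : ℤ) + ((i : ℤ) - (p : ℤ)) = (i : ℤ) := by ring
          rw [h3, zpow_natCast]
        have hap : a ^ (p - i) * a ^ i = a ^ p := pow_sub_mul_pow a hip
        calc lam ^ p * (lam ^ ((i : ℤ) - (p : ℤ)) * (p.choose i : F) *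
                a ^ (p - i) * w ^ i)
            = (lam ^ p * lam ^ ((i : ℤ) - (p : ℤ))) * ((p.choose i : F) *
                a ^ (p - i) * w ^ i) := by ring
          _ = lam ^ i * ((p.choose i : F) * a ^ (p - i) * w ^ i) := by rw [hl]
          _ = a ^ p * ((lam * X) ^ i * (p.choose i : F)) := by
              rw [hw_def]
              linear_combination ((p.choose i : F) * lam ^ i * X ^ i) * hap
      have hbin : (lam * X + 1) ^ p = ∑ k ∈ Finset.range (p + 1),
          (lam * X) ^ k * (p.choose k : F) := by
        rw [add_pow]
        refine Finset.sum_congr rfl ?_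
        intro k _
        ring
      have hset : Finset.range (p + 1)
          = insert 0 (insert p (Finset.Icc 1 (p - 1))) := by
        ext k; simp [Finset.mem_insert, Finset.mem_Icc, Finset.mem_range]; omega
      have h0 : (0 : ℕ) ∉ insert p (Finset.Icc 1 (p - 1)) := by
        simp [Finset.mem_Icc]; omega
      have hpnot : p ∉ Finset.Icc 1 (p - 1) := by simp [Finset.mem_Icc]; omega
      have hsump : ∑ k ∈ Finset.range (p + 1), (lam * X) ^ k * (p.choose k : F)
          = (lam * X) ^ 0 * (p.choose 0 : F) + ((lam * X) ^ p * (p.choose p : F)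
            + ∑ k ∈ Finset.Icc 1 (p - 1), (lam * X) ^ k * (p.choose k : F)) := by
        rw [hset, Finset.sum_insert h0, Finset.sum_insert hpnot]
      have heq' : a ^ p * ((lam * X) ^ 0 * (p.choose 0 : F) +
            ((lam * X) ^ p * (p.choose p : F)
              + ∑ k ∈ Finset.Icc 1 (p - 1), (lam * X) ^ k * (p.choose k : F)))
          = lam ^ p * x ^ ℓ + a ^ p := by
        rw [← hsump, ← hbin, ← mul_pow]
        exact heq
      simp only [Nat.choose_self, Nat.choose_zero_right, Nat.cast_one, pow_zero,
        one_mul, mul_one] at heq'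
      rw [hw_def] at hS ⊢
      linear_combination hS + heq'
    exact (mul_eq_zero.mp hmul).resolve_left hlp
  linear_combination K * key
end

section
/- Let p be a prime and q ≥ 2, 1 ≤ ℓ ≤ p−1 integers. Then |A + A| = Σ_{T=2}^{2(p−1)} (Tq − b(T) − 3). -/
open Pointwise

section aux

variable {p q ℓ : ℤ}

lemma f_nonneg (hp : 2 ≤ p) (hℓ1 : 1 ≤ ℓ) {μ : ℤ} (hμ : 1 ≤ μ) : 0 ≤ μ * ℓ / p :=
  Int.ediv_nonneg (by nlinarith) (by omega)

lemma f_le (hp : 2 ≤ p) (hℓp : ℓ ≤ p - 1) {μ : ℤ} (hμ : 1 ≤ μ) : μ * ℓ / p ≤ μ - 1 := by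
  have h1 : μ * ℓ ≤ -μ + μ * p := by nlinarith
  have h2 : μ * ℓ / p ≤ (-μ + μ * p) / p :=
    Int.ediv_le_ediv (by omega) h1
  rw [Int.add_mul_ediv_right _ _ (by omega : p ≠ 0)] at h2
  have h3 : -μ / p < 0 := Int.ediv_neg_of_neg_of_pos (by omega) (by omega)
  omega

lemma bddBelow_bset (hp : 2 ≤ p) (hℓ1 : 1 ≤ ℓ) (T : ℤ) :
    BddBelow {s : ℤ | ∃ μ μ' : ℤ, μ + μ' = T ∧ 1 ≤ μ ∧ μ ≤ p - 1 ∧ 1 ≤ μ' ∧ μ' ≤ p - 1 ∧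
      s = μ * ℓ / p + μ' * ℓ / p} := by
  refine ⟨0, ?_⟩
  rintro s ⟨μ, μ', -, hμ1, -, hμ'1, -, rfl⟩
  have := f_nonneg hp hℓ1 hμ1
  have := f_nonneg hp hℓ1 hμ'1
  omega

lemma bset_nonempty (hp : 2 ≤ p) {T : ℤ} (hT1 : 2 ≤ T) (hT2 : T ≤ 2 * (p - 1)) :
    Set.Nonempty {s : ℤ | ∃ μ μ' : ℤ, μ + μ' = T ∧ 1 ≤ μ ∧ μ ≤ p - 1 ∧ 1 ≤ μ' ∧ μ' ≤ p - 1 ∧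
      s = μ * ℓ / p + μ' * ℓ / p} := by
  refine ⟨max 1 (T - (p - 1)) * ℓ / p + (T - max 1 (T - (p - 1))) * ℓ / p,
    max 1 (T - (p - 1)), T - max 1 (T - (p - 1)), by omega, le_max_left _ _, by omega, by omega,
    by omega, rfl⟩

lemma bLow_mem (hp : 2 ≤ p) (hℓ1 : 1 ≤ ℓ) {T : ℤ} (hT1 : 2 ≤ T) (hT2 : T ≤ 2 * (p - 1)) :
    ∃ μ μ' : ℤ, μ + μ' = T ∧ 1 ≤ μ ∧ μ ≤ p - 1 ∧ 1 ≤ μ' ∧ μ' ≤ p - 1 ∧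
      bLow p ℓ T = μ * ℓ / p + μ' * ℓ / p :=
  Int.csInf_mem (bset_nonempty hp hT1 hT2) (bddBelow_bset hp hℓ1 T)

lemma bLow_le (hp : 2 ≤ p) (hℓ1 : 1 ≤ ℓ) {T μ μ' : ℤ} (hs : μ + μ' = T)
    (h1 : 1 ≤ μ) (h2 : μ ≤ p - 1) (h3 : 1 ≤ μ') (h4 : μ' ≤ p - 1) :
    bLow p ℓ T ≤ μ * ℓ / p + μ' * ℓ / p :=
  csInf_le (bddBelow_bset hp hℓ1 T) ⟨μ, μ', hs, h1, h2, h3, h4, rfl⟩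

lemma sum_eq (hp : 2 ≤ p) (hq : 2 ≤ q) (hℓ1 : 1 ≤ ℓ) (hℓp : ℓ ≤ p - 1) :
    indexSetA p q ℓ + indexSetA p q ℓ =
      {x : ℤ × ℤ | 2 ≤ x.2 ∧ x.2 ≤ 2 * (p - 1) ∧ bLow p ℓ x.2 ≤ x.1 ∧ x.1 ≤ x.2 * q - 4} := by
  ext x
  constructor
  · rintro ⟨a, ha, b, hb, rfl⟩
    obtain ⟨ha1, ha2, ha3, ha4⟩ := ha
    obtain ⟨hb1, hb2, hb3, hb4⟩ := hb
    refine ⟨by simp; omega, by simp; omega, ?_, by simp; nlinarith⟩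
    have := bLow_le (p := p) (ℓ := ℓ) hp hℓ1 (rfl : a.2 + b.2 = a.2 + b.2) ha1 ha2 hb1 hb2
    simpa using le_trans this (by omega)
  · rintro ⟨hx1, hx2, hx3, hx4⟩
    obtain ⟨μ, μ', hsum, hμ1, hμ2, hμ'1, hμ'2, hbe⟩ := bLow_mem hp hℓ1 hx1 hx2
    set N := x.1
    set N₁ := min (μ * q - 2) (N - μ' * ℓ / p) with hN₁
    have hf0 := f_le hp hℓp hμ1
    have hf1 := f_le hp hℓp hμ'1
    refine ⟨(N₁, μ), ⟨hμ1, hμ2, ?_, min_le_left _ _⟩, (N - N₁, μ'),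
      ⟨hμ'1, hμ'2, ?_, ?_⟩, ?_⟩
    · show μ * ℓ / p ≤ N₁
      exact le_min (by nlinarith) (by omega)
    · have := min_le_right (μ * q - 2) (N - μ' * ℓ / p)
      simpa using by omega
    · have h1 : N - μ' * q + 2 ≤ μ * q - 2 := by nlinarith
      have h2 : N - μ' * q + 2 ≤ N - μ' * ℓ / p := by nlinarith
      have := le_min h1 h2
      simpa using by omega
    · have : N₁ + (N - N₁) = N := by ring
      simp [Prod.ext_iff, this, hsum]
      rfl

end aux

/-- `|A + A| = ∑_{T=2}^{2(p-1)} (Tq - b(T) - 3)`. -/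
theorem card_minkowski_sum (p q ℓ : ℤ) (hp : Prime p) (hq : 2 ≤ q)
    (hℓ1 : 1 ≤ ℓ) (hℓp : ℓ ≤ p - 1) :
    (((indexSetA p q ℓ + indexSetA p q ℓ).ncard : ℤ)) =
      ∑ T ∈ Finset.Icc (2 : ℤ) (2 * (p - 1)), (T * q - bLow p ℓ T - 3) := by
  have hp2 : 2 ≤ p := by omega
  -- the key bound b(T) ≤ Tq - 4 for T in range
  have hb : ∀ T : ℤ, 2 ≤ T → T ≤ 2 * (p - 1) → bLow p ℓ T ≤ T * q - 4 := by
    intro T h1 h2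
    obtain ⟨μ, μ', hsum, hμ1, hμ2, hμ'1, hμ'2, hbe⟩ := bLow_mem hp2 hℓ1 h1 h2
    have := f_le hp2 hℓp hμ1
    have := f_le hp2 hℓp hμ'1
    nlinarith
  set F : Finset (ℤ × ℤ) := (Finset.Icc (2 : ℤ) (2 * (p - 1))).biUnion
    (fun T => (Finset.Icc (bLow p ℓ T) (T * q - 4)).image (fun N => (N, T))) with hF
  have hset : indexSetA p q ℓ + indexSetA p q ℓ = ↑F := by
    rw [sum_eq hp2 hq hℓ1 hℓp]
    ext x
    simp only [hF, Finset.coe_biUnion, Finset.mem_coe, Finset.mem_Icc, Set.mem_iUnion,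
      Finset.mem_image, Set.mem_setOf_eq]
    constructor
    · rintro ⟨h1, h2, h3, h4⟩
      exact ⟨x.2, ⟨h1, h2⟩, x.1, ⟨h3, h4⟩, rfl⟩
    · rintro ⟨T, ⟨hT1, hT2⟩, N, ⟨hN1, hN2⟩, rfl⟩
      exact ⟨hT1, hT2, hN1, hN2⟩
  rw [hset, Set.ncard_coe_finset, hF, Finset.card_biUnion, Nat.cast_sum]
  · apply Finset.sum_congr rfl
    intro T hT
    rw [Finset.mem_Icc] at hT
    rw [Finset.card_image_of_injective _ (fun a b h => (Prod.mk.injEq _ _ _ _ ▸ h).1),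
      Int.card_Icc]
    have := hb T hT.1 hT.2
    omega
  · intro T hT T' hT' hne
    simp only [Finset.disjoint_left, Finset.mem_image]
    rintro x ⟨N, -, rfl⟩ ⟨N', -, h⟩
    exact hne (Prod.mk.injEq _ _ _ _ ▸ h).2.symm
end
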